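/- arXiv:1701.05500 — 2 statements merged into one kernel-verified Lean document; each statement's English description precedes it below -/
import Mathlib

section
/- A graph G is a Laman graph if and only if G can be constructed from the graph consisting of two vertices joined by a single edge by a finite sequence of applications of the two Henneberg rules. -/
set_option maxHeartbeats 1000000

noncomputable section
open Classical

namespace LamanGraphs

variable {V : Type} [Fintype V]

/-- The Laman counting conditions for a (connected) simple graph:
`|E| = 2|V| - 3`, and `|E'| ≤ 2|V'| - 3` for every subgraph with at least two vertices. -/
def LamanCond (G : SimpleGraph V) : Prop :=
  G.edgeSet.ncard + 3 = 2 * Fintype.card V ∧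
  ∀ G' : G.Subgraph, 2 ≤ G'.verts.ncard → G'.edgeSet.ncard + 3 ≤ 2 * G'.verts.ncard

/-- The quadratic form `⟨z, z⟩ = z₀² + z₁²` on `ℂ²`. -/
def qf (z : Fin 2 → ℂ) : ℂ := z 0 ^ 2 + z 1 ^ 2

/-- A realization `ρ : V → ℂ²` is compatible with a labeling `lam : E → ℂ` if for every
edge `e = {u,v}` one has `lam e = ⟨ρ(u) - ρ(v), ρ(u) - ρ(v)⟩`. -/
def Compatible (G : SimpleGraph V) (lam : ↥G.edgeSet → ℂ) (ρ : V → Fin 2 → ℂ) : Prop :=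
  ∀ e : ↥G.edgeSet, ∀ u v : V, (e : Sym2 V) = s(u, v) → lam e = qf (ρ u - ρ v)

/-- Two realizations are equivalent if they differ by a direct complex isometry
`z ↦ A z + b` with `Aᵀ A = 1` and `det A = 1`. -/
def Equivalent (ρ₁ ρ₂ : V → Fin 2 → ℂ) : Prop :=
  ∃ (A : Matrix (Fin 2) (Fin 2) ℂ) (b : Fin 2 → ℂ),
    A.transpose * A = 1 ∧ A.det = 1 ∧ ∀ v, ρ₁ v = A.mulVec (ρ₂ v) + b

/-- A labeled graph `(G, lam)` is rigid if it admits a compatible realization and only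
finitely many compatible realizations up to equivalence. -/
def Rigid (G : SimpleGraph V) (lam : ↥G.edgeSet → ℂ) : Prop :=
  (∃ ρ, Compatible G lam ρ) ∧
  ∃ F : Set (V → Fin 2 → ℂ), F.Finite ∧
    ∀ ρ, Compatible G lam ρ → ∃ ρ' ∈ F, Equivalent ρ ρ'

/-- A graph is generically rigid if `(G, lam)` is rigid for all labelings outside the zero
set of some nonzero polynomial. -/
def GenericallyRigid (G : SimpleGraph V) : Prop :=
  ∃ P : MvPolynomial ↥G.edgeSet ℂ, P ≠ 0 ∧
    ∀ lam : ↥G.edgeSet → ℂ, MvPolynomial.eval lam P ≠ 0 → Rigid G lam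

/-- The polynomial map `h_G` on all of `ℂ^{2|V|}`, sending a tuple of points to the vector
of squared edge lengths. -/
def hMap (G : SimpleGraph V) (z : V → Fin 2 → ℂ) : ↥G.edgeSet → ℂ := fun e =>
  Sym2.lift ⟨fun u v => (z u 0 - z v 0) ^ 2 + (z u 1 - z v 1) ^ 2, by intro a b; ring⟩
    (e : Sym2 V)

/-- Membership in the linear subspace `ℂ^{2|V|-3} ⊆ ℂ^{2|V|}` determined by the chosen edge
`{ubar, vbar}`: the conditions `x_ū = y_ū = 0` and `x_v̄ = 0`. -/
def InDomain (ubar vbar : V) (z : V → Fin 2 → ℂ) : Prop :=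
  z ubar 0 = 0 ∧ z ubar 1 = 0 ∧ z vbar 0 = 0

/-- The restriction of `h_G` to `ℂ^{2|V|-3}` is dominant: its image is not contained in the
zero set of any nonzero polynomial. -/
def HDominant (G : SimpleGraph V) (ubar vbar : V) : Prop :=
  ∀ P : MvPolynomial ↥G.edgeSet ℂ,
    (∀ z, InDomain ubar vbar z → MvPolynomial.eval (hMap G z) P = 0) → P = 0

/-- The fiber of (the restriction of) `h_G` over a labeling `lam`. -/
def HFiber (G : SimpleGraph V) (ubar vbar : V) (lam : ↥G.edgeSet → ℂ) :
    Set (V → Fin 2 → ℂ) :=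
  {z | InDomain ubar vbar z ∧ hMap G z = lam}

/-- The quotient `ℂ^V / ⟨(1,…,1)⟩` of `ℂ^V` by the line of constant vectors. -/
abbrev ModV (V : Type) := (V → ℂ) ⧸ (Submodule.span ℂ {(fun _ => 1 : V → ℂ)})

/-- The value on an edge of the product `(x_u - x_v)(y_u - y_v)`, which is well defined on
unordered edges. -/
def fgVal (x y : V → ℂ) (s : Sym2 V) : ℂ :=
  Sym2.lift ⟨fun u v => (x u - x v) * (y u - y v), by intro a b; ring⟩ s

/-- The fiber of the rational map
`f_G : ℙ(ℂ^V/⟨1⟩) × ℙ(ℂ^V/⟨1⟩) ⇢ ℙ(ℂ^E)` over the projective point `[lam]`: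
the set of pairs of projective points at which `f_G` is defined and takes the value `[lam]`. -/
def FFiber (G : SimpleGraph V) (lam : ↥G.edgeSet → ℂ) :
    Set (Projectivization ℂ (ModV V) × Projectivization ℂ (ModV V)) :=
  {XY | ∃ (x y : V → ℂ)
    (hx : (Submodule.Quotient.mk x : ModV V) ≠ 0)
    (hy : (Submodule.Quotient.mk y : ModV V) ≠ 0),
    XY.1 = Projectivization.mk ℂ (Submodule.Quotient.mk x) hx ∧
    XY.2 = Projectivization.mk ℂ (Submodule.Quotient.mk y) hy ∧
    (fun e : ↥G.edgeSet => fgVal x y (e : Sym2 V)) ≠ 0 ∧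
    ∃ c : ℂ, c ≠ 0 ∧ ∀ e : ↥G.edgeSet, fgVal x y (e : Sym2 V) = c * lam e}

/-- Graphs constructible from a single edge by the two Henneberg rules. -/
inductive Henneberg : {n : ℕ} → SimpleGraph (Fin n) → Prop where
  | base : Henneberg (⊤ : SimpleGraph (Fin 2))
  | rule1 {n : ℕ} {G : SimpleGraph (Fin n)} (u v : Fin n) (huv : u ≠ v)
      (h : Henneberg G) :
      Henneberg (SimpleGraph.fromRel (fun a b =>
        (∃ a₀ b₀ : Fin n, a = a₀.castSucc ∧ b = b₀.castSucc ∧ G.Adj a₀ b₀) ∨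
        (a = u.castSucc ∧ b = Fin.last n) ∨ (a = v.castSucc ∧ b = Fin.last n)))
  | rule2 {n : ℕ} {G : SimpleGraph (Fin n)} (u v w : Fin n) (huv : u ≠ v) (huw : u ≠ w)
      (hvw : v ≠ w) (hadj : G.Adj u v) (h : Henneberg G) :
      Henneberg (SimpleGraph.fromRel (fun a b =>
        (∃ a₀ b₀ : Fin n, a = a₀.castSucc ∧ b = b₀.castSucc ∧ G.Adj a₀ b₀ ∧
          ¬(a₀ = u ∧ b₀ = v) ∧ ¬(a₀ = v ∧ b₀ = u)) ∨
        (a = u.castSucc ∧ b = Fin.last n) ∨ (a = v.castSucc ∧ b = Fin.last n) ∨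
        (a = w.castSucc ∧ b = Fin.last n)))


set_option linter.unusedSectionVars false
set_option linter.unusedVariables false

/-- ordered pair count of adjacent pairs inside X; equals twice the number of edges inside X -/
def pc (G : SimpleGraph V) (X : Finset V) : ℕ :=
  ((X ×ˢ X).filter fun p => G.Adj p.1 p.2).card

lemma pc_mono (G : SimpleGraph V) {X Y : Finset V} (h : X ⊆ Y) : pc G X ≤ pc G Y :=
  Finset.card_le_card (Finset.filter_subset_filter _ (Finset.product_subset_product h h))

lemma pc_mono_graph {G H : SimpleGraph V} (h : ∀ a b, G.Adj a b → H.Adj a b) (X : Finset V) :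
    pc G X ≤ pc H X :=
  Finset.card_le_card (Finset.monotone_filter_right _ (fun p _ hp => h _ _ hp))

lemma pc_eq_sum (G : SimpleGraph V) (X : Finset V) :
    pc G X = ∑ x ∈ X, (X.filter (G.Adj x)).card := by
  classical
  rw [pc, Finset.card_eq_sum_card_fiberwise (f := Prod.fst) (t := X)
    (fun p hp => (Finset.mem_product.1 (Finset.mem_filter.1 hp).1).1)]
  refine Finset.sum_congr rfl fun x hx => ?_
  refine Finset.card_bij (fun p _ => p.2) ?_ ?_ ?_
  · intro p hp
    simp only [Finset.mem_filter, Finset.mem_product] at hp ⊢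
    obtain ⟨⟨⟨h1, h2⟩, h3⟩, h4⟩ := hp
    exact ⟨h2, h4 ▸ h3⟩
  · intro p hp q hq hpq
    simp only [Finset.mem_filter] at hp hq
    exact Prod.ext (hp.2.trans hq.2.symm) hpq
  · intro y hy
    simp only [Finset.mem_filter] at hy
    exact ⟨(x, y), by simp [Finset.mem_filter, Finset.mem_product, hx, hy.1, hy.2], rfl⟩

lemma pc_erase [DecidableEq V] (G : SimpleGraph V) (X : Finset V) (t : V) (ht : t ∈ X) :
    pc G X = pc G (X.erase t) + 2 * ((X.erase t).filter (G.Adj t)).card := by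
  classical
  have hXi : X = insert t (X.erase t) := (Finset.insert_erase ht).symm
  have htn : t ∉ X.erase t := Finset.notMem_erase t X
  rw [pc_eq_sum]
  rw [hXi, Finset.sum_insert htn]
  have hrow : ∀ x, (insert t (X.erase t)).filter (G.Adj x) =
      ((X.erase t).filter (G.Adj x)) ∪ (if G.Adj x t then {t} else ∅) := by
    intro x
    split <;> rename_i h <;> ext y <;>
      simp only [Finset.mem_filter, Finset.mem_insert, Finset.mem_union, Finset.mem_singleton,
        Finset.notMem_empty, Finset.union_empty] <;> constructor <;> intro hy
    · rcases hy with ⟨(rfl | hy1), hy2⟩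
      · right; rfl
      · left; exact ⟨hy1, hy2⟩
    · rcases hy with ⟨hy1, hy2⟩ | rfl
      · exact ⟨Or.inr hy1, hy2⟩
      · exact ⟨Or.inl rfl, h⟩
    · rcases hy with ⟨(rfl | hy1), hy2⟩
      · exact absurd hy2 h
      · exact ⟨hy1, hy2⟩
    · exact ⟨Or.inr hy.1, hy.2⟩
  have hrowcard : ∀ x, x ≠ t → ((insert t (X.erase t)).filter (G.Adj x)).card =
      ((X.erase t).filter (G.Adj x)).card + (if G.Adj x t then 1 else 0) := by
    intro x hx
    rw [hrow]
    split <;> rename_i h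
    · rw [Finset.card_union_of_disjoint (by simp [Finset.disjoint_singleton_right, htn]
        ), Finset.card_singleton]
    · simp
  have hrowt : ((insert t (X.erase t)).filter (G.Adj t)).card =
      ((X.erase t).filter (G.Adj t)).card := by
    rw [hrow, if_neg (G.irrefl), Finset.union_empty]
  rw [hrowt]
  have hsum : ∑ x ∈ X.erase t, ((insert t (X.erase t)).filter (G.Adj x)).card =
      ∑ x ∈ X.erase t, (((X.erase t).filter (G.Adj x)).card + (if G.Adj x t then 1 else 0)) :=
    Finset.sum_congr rfl fun x hx => hrowcard x (Finset.ne_of_mem_erase hx)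
  rw [hsum, Finset.sum_add_distrib]
  have hind : ∑ x ∈ X.erase t, (if G.Adj x t then 1 else 0) =
      ((X.erase t).filter (G.Adj t)).card := by
    rw [Finset.card_filter]
    refine Finset.sum_congr rfl fun x _ => ?_
    congr 1
    exact propext (G.adj_comm x t)
  rw [hind, Finset.erase_insert htn, pc_eq_sum G (X.erase t)]
  omega


lemma pc_eq_zero_of_card_le_one (G : SimpleGraph V) {X : Finset V} (h : X.card ≤ 1) :
    pc G X = 0 := by
  classical
  rw [pc, Finset.card_eq_zero]
  ext p
  simp only [Finset.mem_filter, Finset.mem_product, Finset.notMem_empty, iff_false]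
  rintro ⟨⟨h1, h2⟩, hadj⟩
  exact hadj.ne (Finset.card_le_one.1 h _ h1 _ h2)

lemma pc_pair (G : SimpleGraph V) {p q : V} (hpq : p ≠ q) (hadj : G.Adj p q)
    (X : Finset V) (hX : ∀ r, r ∈ X ↔ r = p ∨ r = q) : pc G X = 2 := by
  classical
  rw [pc]
  have : ((X ×ˢ X).filter (fun x => G.Adj x.1 x.2)) =
      {(p, q), (q, p)} := by
    ext x
    simp only [Finset.mem_filter, Finset.mem_product, Finset.mem_insert, Finset.mem_singleton,
      hX]
    constructor
    · rintro ⟨⟨h1 | h1, h2 | h2⟩, hA⟩ <;>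
        first
        | exact absurd (h1.trans h2.symm) hA.ne
        | (left; exact Prod.ext h1 h2)
        | (right; exact Prod.ext h1 h2)
    · rintro (rfl | rfl) <;> simp [hadj, hadj.symm]
  rw [this, Finset.card_insert_of_notMem (by simp [Prod.ext_iff, hpq]),
    Finset.card_singleton]

lemma pc_even (G : SimpleGraph V) (X : Finset V) : Even (pc G X) := by
  classical
  let e := Fintype.equivFin V
  set F := (X ×ˢ X).filter (fun p => G.Adj p.1 p.2) with hF
  have hsplit : F = F.filter (fun p => e p.1 < e p.2) ∪ F.filter (fun p => e p.2 < e p.1) := by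
    ext p
    simp only [Finset.mem_union, Finset.mem_filter]
    constructor
    · intro hp
      have hne : e p.1 ≠ e p.2 := fun h => by
        have : p.1 = p.2 := e.injective h
        exact ((Finset.mem_filter.1 hp).2.ne this)
      rcases lt_or_gt_of_ne hne with h | h
      · exact Or.inl ⟨hp, h⟩
      · exact Or.inr ⟨hp, h⟩
    · rintro (⟨hp, _⟩ | ⟨hp, _⟩) <;> exact hp
  have hdisj : Disjoint (F.filter (fun p => e p.1 < e p.2))
      (F.filter (fun p => e p.2 < e p.1)) := by
    rw [Finset.disjoint_left]
    intro p hp1 hp2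
    exact absurd ((Finset.mem_filter.1 hp1).2) (not_lt.2 (le_of_lt (Finset.mem_filter.1 hp2).2))
  have hcard : (F.filter (fun p => e p.1 < e p.2)).card =
      (F.filter (fun p => e p.2 < e p.1)).card := by
    refine Finset.card_bij (fun p _ => p.swap) ?_ ?_ ?_
    · intro p hp
      simp only [Finset.mem_filter, Finset.mem_product, hF] at hp ⊢
      exact ⟨⟨⟨hp.1.1.2, hp.1.1.1⟩, hp.1.2.symm⟩, hp.2⟩
    · intro p _ q _ h
      exact Prod.swap_injective h
    · intro p hp
      refine ⟨p.swap, ?_, by simp⟩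
      simp only [Finset.mem_filter, Finset.mem_product, hF] at hp ⊢
      exact ⟨⟨⟨hp.1.1.2, hp.1.1.1⟩, hp.1.2.symm⟩, hp.2⟩
  have : pc G X = F.card := rfl
  rw [this, hsplit, Finset.card_union_of_disjoint hdisj, hcard]
  exact ⟨_, rfl⟩

lemma pc_submod (G : SimpleGraph V) (X Y : Finset V) :
    pc G X + pc G Y ≤ pc G (X ∪ Y) + pc G (X ∩ Y) := by
  classical
  set A := (X ×ˢ X).filter (fun p => G.Adj p.1 p.2)
  set B := (Y ×ˢ Y).filter (fun p => G.Adj p.1 p.2)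
  have hAB : A ∩ B = ((X ∩ Y) ×ˢ (X ∩ Y)).filter (fun p => G.Adj p.1 p.2) := by
    ext p
    simp only [A, B, Finset.mem_inter, Finset.mem_filter, Finset.mem_product]
    tauto
  have hUn : A ∪ B ⊆ ((X ∪ Y) ×ˢ (X ∪ Y)).filter (fun p => G.Adj p.1 p.2) := by
    intro p hp
    simp only [A, B, Finset.mem_union, Finset.mem_filter, Finset.mem_product] at hp ⊢
    tauto
  have h1 := Finset.card_union_add_card_inter A B
  have h2 := Finset.card_le_card hUn
  rw [hAB] at h1
  have e1 : pc G (X ∪ Y) = (((X ∪ Y) ×ˢ (X ∪ Y)).filter (fun p => G.Adj p.1 p.2)).card := rfl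
  have e2 : pc G (X ∩ Y) = (((X ∩ Y) ×ˢ (X ∩ Y)).filter (fun p => G.Adj p.1 p.2)).card := rfl
  have e3 : pc G X = A.card := rfl
  have e4 : pc G Y = B.card := rfl
  omega

/-- transfer pc along an adjacency-preserving embedding -/
lemma pc_map {W : Type} [Fintype W] (G : SimpleGraph V) (H : SimpleGraph W)
    (f : W ↪ V) (hadj : ∀ a b, H.Adj a b ↔ G.Adj (f a) (f b)) (Y : Finset W) :
    pc G (Y.map f) = pc H Y := by
  classical
  refine (Finset.card_bij (fun p _ => (f p.1, f p.2)) ?_ ?_ ?_).symm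
  · intro p hp
    simp only [Finset.mem_filter, Finset.mem_product] at hp ⊢
    exact ⟨⟨Finset.mem_map_of_mem f hp.1.1, Finset.mem_map_of_mem f hp.1.2⟩,
      (hadj _ _).1 hp.2⟩
  · intro p _ q _ h
    rw [Prod.ext_iff] at h
    exact Prod.ext (f.injective h.1) (f.injective h.2)
  · intro p hp
    simp only [Finset.mem_filter, Finset.mem_product, Finset.mem_map] at hp
    obtain ⟨⟨⟨a, ha, ha'⟩, ⟨b, hb, hb'⟩⟩, hA⟩ := hp
    refine ⟨(a, b), ?_, ?_⟩
    · simp only [Finset.mem_filter, Finset.mem_product]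
      exact ⟨⟨ha, hb⟩, (hadj a b).2 (by rwa [ha', hb'])⟩
    · exact Prod.ext (by simpa using ha') (by simpa using hb')

lemma pc_univ (G : SimpleGraph V) : pc G Finset.univ = 2 * G.edgeFinset.card := by
  classical
  have hc : Fintype.card G.Dart = pc G Finset.univ := by
    have e : G.Dart ≃ {p : V × V // G.Adj p.1 p.2} :=
      ⟨fun d => ⟨d.toProd, d.adj⟩, fun p => ⟨p.1, p.2⟩,
        fun d => by ext <;> rfl, fun p => by ext <;> rfl⟩
    rw [Fintype.card_congr e, Fintype.card_subtype, pc, Finset.univ_product_univ]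
  rw [← hc, SimpleGraph.dart_card_eq_twice_card_edges]

/-- pc version of the Laman conditions -/
def LamanPC (G : SimpleGraph V) : Prop :=
  pc G Finset.univ + 6 = 4 * Fintype.card V ∧
  ∀ X : Finset V, 2 ≤ X.card → pc G X + 6 ≤ 4 * X.card

lemma two_mul_ncard_subgraph_edgeSet (G : SimpleGraph V) (G' : G.Subgraph) :
    2 * G'.edgeSet.ncard = pc G'.spanningCoe Finset.univ := by
  classical
  have h1 : G'.edgeSet = G'.spanningCoe.edgeSet := by
    ext e
    induction e with
    | _ u v => rfl
  rw [h1, ← SimpleGraph.coe_edgeFinset, Set.ncard_coe_finset, pc_univ]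

lemma lamanCond_iff_lamanPC (G : SimpleGraph V) : LamanCond G ↔ LamanPC G := by
  classical
  constructor
  · rintro ⟨h1, h2⟩
    constructor
    · rw [pc_univ]
      have : G.edgeSet.ncard = G.edgeFinset.card := by
        rw [← SimpleGraph.coe_edgeFinset, Set.ncard_coe_finset]
      omega
    · intro X hX
      set G' : G.Subgraph :=
        { verts := ↑X
          Adj := fun a b => G.Adj a b ∧ a ∈ X ∧ b ∈ X
          adj_sub := fun h => h.1
          edge_vert := fun h => Finset.mem_coe.2 h.2.1
          symm := ⟨fun a b h => ⟨h.1.symm, h.2.2, h.2.1⟩⟩ } with hG'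
      have hverts : G'.verts.ncard = X.card := by
        simp [hG', Set.ncard_coe_finset]
      have hpc : 2 * G'.edgeSet.ncard = pc G X := by
        rw [two_mul_ncard_subgraph_edgeSet, pc]
        congr 1
        ext p
        simp only [Finset.mem_filter, Finset.mem_product, Finset.mem_univ, true_and, hG']
        constructor
        · intro hp
          exact ⟨⟨hp.2.1, hp.2.2⟩, hp.1⟩
        · intro hp
          exact ⟨hp.2, hp.1.1, hp.1.2⟩
      have := h2 G' (hverts ▸ hX)
      omega
  · rintro ⟨h1, h2⟩
    constructor
    · rw [pc_univ] at h1
      have : G.edgeSet.ncard = G.edgeFinset.card := by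
        rw [← SimpleGraph.coe_edgeFinset, Set.ncard_coe_finset]
      omega
    · intro G' hG'
      have hfin : G'.verts.Finite := Set.toFinite _
      set X := hfin.toFinset with hX
      have hcard : G'.verts.ncard = X.card := by
        rw [Set.ncard_eq_toFinset_card _ hfin]
      have hle : pc G'.spanningCoe Finset.univ ≤ pc G X := by
        apply Finset.card_le_card
        intro p hp
        simp only [Finset.mem_filter, Finset.mem_product, Finset.mem_univ, true_and] at hp ⊢
        exact ⟨⟨hfin.mem_toFinset.2 (G'.edge_vert hp),
          hfin.mem_toFinset.2 (G'.edge_vert hp.symm)⟩, G'.adj_sub hp⟩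
      have h2m := two_mul_ncard_subgraph_edgeSet G G'
      have := h2 X (by omega)
      have hpceven := pc_even G X
      omega



lemma pc_edge_diff {G H : SimpleGraph V} {p q : V} (hpq : p ≠ q)
    (hH : ¬H.Adj p q)
    (h : ∀ a b, G.Adj a b ↔ H.Adj a b ∨ ((a = p ∧ b = q) ∨ (a = q ∧ b = p)))
    (X : Finset V) :
    pc G X = pc H X + (if p ∈ X ∧ q ∈ X then 2 else 0) := by
  classical
  have hsplit : (X ×ˢ X).filter (fun r => G.Adj r.1 r.2) =
      ((X ×ˢ X).filter fun r => H.Adj r.1 r.2) ∪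
      ((X ×ˢ X).filter fun r => r = (p, q) ∨ r = (q, p)) := by
    ext r
    simp only [Finset.mem_union, Finset.mem_filter, Finset.mem_product, Prod.ext_iff]
    constructor
    · rintro ⟨hr, hadj⟩
      rcases (h r.1 r.2).1 hadj with h' | h'
      · exact Or.inl ⟨hr, h'⟩
      · exact Or.inr ⟨hr, h'⟩
    · rintro (⟨hr, h'⟩ | ⟨hr, h'⟩)
      · exact ⟨hr, (h r.1 r.2).2 (Or.inl h')⟩
      · exact ⟨hr, (h r.1 r.2).2 (Or.inr h')⟩
  have hdisj : Disjoint ((X ×ˢ X).filter fun r => H.Adj r.1 r.2)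
      ((X ×ˢ X).filter fun r => r = (p, q) ∨ r = (q, p)) := by
    rw [Finset.disjoint_left]
    intro r hr1 hr2
    rcases (Finset.mem_filter.1 hr2).2 with rfl | rfl
    · exact hH (Finset.mem_filter.1 hr1).2
    · exact hH ((Finset.mem_filter.1 hr1).2).symm
  have hcard2 : ((X ×ˢ X).filter fun r => r = (p, q) ∨ r = (q, p)).card =
      (if p ∈ X ∧ q ∈ X then 2 else 0) := by
    split <;> rename_i hmem
    · have : ((X ×ˢ X).filter fun r => r = (p, q) ∨ r = (q, p)) = {(p, q), (q, p)} := by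
        ext r
        simp only [Finset.mem_filter, Finset.mem_product, Finset.mem_insert,
          Finset.mem_singleton]
        constructor
        · exact fun hr => hr.2
        · rintro (rfl | rfl) <;> simp [hmem.1, hmem.2]
      rw [this, Finset.card_insert_of_notMem (by simp [Prod.ext_iff, hpq]),
        Finset.card_singleton]
    · rw [Finset.card_eq_zero]
      ext r
      simp only [Finset.mem_filter, Finset.mem_product, Finset.notMem_empty, iff_false]
      rintro ⟨hr, rfl | rfl⟩
      exacts [hmem ⟨hr.1, hr.2⟩, hmem ⟨hr.2, hr.1⟩]
  show ((X ×ˢ X).filter fun r => G.Adj r.1 r.2).card = _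
  rw [hsplit, Finset.card_union_of_disjoint hdisj, hcard2]
  rfl

lemma univ_erase_last {n : ℕ} :
    (Finset.univ : Finset (Fin (n + 1))).erase (Fin.last n) =
      Finset.univ.map Fin.castSuccEmb := by
  ext a
  simp only [Finset.mem_erase, Finset.mem_univ, and_true, Finset.mem_map, Fin.castSuccEmb,
    Fin.castAddEmb]
  constructor
  · intro ha
    obtain ⟨b, hb⟩ := Fin.exists_castSucc_eq.2 ha
    exact ⟨b, trivial, hb⟩
  · rintro ⟨b, -, rfl⟩
    exact (Fin.castSucc_lt_last b).ne

lemma eq_map_of_not_last {n : ℕ} (X : Finset (Fin (n + 1))) (h : Fin.last n ∉ X) :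
    ∃ Y : Finset (Fin n), X = Y.map Fin.castSuccEmb := by
  classical
  refine ⟨X.preimage Fin.castSucc (Fin.castSucc_injective n).injOn, ?_⟩
  ext a
  simp only [Finset.mem_map, Finset.mem_preimage, Fin.castSuccEmb, Fin.castAddEmb]
  constructor
  · intro ha
    have hne : a ≠ Fin.last n := fun he => h (he ▸ ha)
    obtain ⟨b, hb⟩ := Fin.exists_castSucc_eq.2 hne
    exact ⟨b, hb ▸ ha, hb⟩
  · rintro ⟨b, hb, rfl⟩
    exact hb

/-- Key extension lemma for the subgraph conditions. -/
lemma lamanPC_sub_of_ext {n : ℕ} (H : SimpleGraph (Fin (n + 1))) (G₀ : SimpleGraph (Fin n))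
    (hres : ∀ a b : Fin n, H.Adj a.castSucc b.castSucc ↔ G₀.Adj a b)
    (hsub : ∀ Y : Finset (Fin n), 2 ≤ Y.card → pc G₀ Y + 6 ≤ 4 * Y.card)
    (hkey : ∀ Y : Finset (Fin n), 2 ≤ Y.card →
      pc G₀ Y + 2 * ((Y.filter fun y => H.Adj (Fin.last n) y.castSucc).card) + 6 ≤
        4 * (Y.card + 1)) :
    ∀ X : Finset (Fin (n + 1)), 2 ≤ X.card → pc H X + 6 ≤ 4 * X.card := by
  classical
  have hpcmap : ∀ Y : Finset (Fin n), pc H (Y.map Fin.castSuccEmb) = pc G₀ Y := by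
    intro Y
    exact pc_map H G₀ Fin.castSuccEmb (fun a b => (hres a b).symm) Y
  intro X hX
  by_cases hl : Fin.last n ∈ X
  · obtain ⟨Y, hY⟩ := eq_map_of_not_last (X.erase (Fin.last n)) (Finset.notMem_erase _ _)
    have hcard : X.card = Y.card + 1 := by
      rw [← Finset.card_erase_add_one hl, hY, Finset.card_map]
    have hpe : pc H X = pc G₀ Y +
        2 * (Y.filter fun y => H.Adj (Fin.last n) y.castSucc).card := by
      rw [pc_erase H X (Fin.last n) hl, hY, hpcmap, Finset.filter_map, Finset.card_map]
      rfl
    by_cases hY2 : 2 ≤ Y.card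
    · have := hkey Y hY2
      omega
    · have hY1 : Y.card ≤ 1 := by omega
      have h0 : pc G₀ Y = 0 := pc_eq_zero_of_card_le_one G₀ hY1
      have hf1 : (Y.filter fun y => H.Adj (Fin.last n) y.castSucc).card ≤ 1 :=
        le_trans (Finset.card_filter_le _ _) hY1
      omega
  · obtain ⟨Y, hY⟩ := eq_map_of_not_last X hl
    have hcard : X.card = Y.card := by rw [hY, Finset.card_map]
    rw [hY, hpcmap, Finset.card_map]
    exact hsub Y (by omega)



/-- Graph with one (possible) edge removed. -/
def delE (G : SimpleGraph V) (u v : V) : SimpleGraph V where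
  Adj a b := G.Adj a b ∧ ¬(a = u ∧ b = v) ∧ ¬(a = v ∧ b = u)
  symm := ⟨fun a b h => ⟨h.1.symm, fun hc => h.2.2 ⟨hc.2, hc.1⟩, fun hc => h.2.1 ⟨hc.2, hc.1⟩⟩⟩
  loopless := ⟨fun a h => G.irrefl h.1⟩

lemma delE_not_adj (G : SimpleGraph V) (u v : V) : ¬(delE G u v).Adj u v :=
  fun h => h.2.1 ⟨rfl, rfl⟩

lemma adj_iff_delE (G : SimpleGraph V) {u v : V} (huv : G.Adj u v) (a b : V) :
    G.Adj a b ↔ (delE G u v).Adj a b ∨ ((a = u ∧ b = v) ∨ (a = v ∧ b = u)) := by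
  constructor
  · intro h
    by_cases h1 : a = u ∧ b = v
    · exact Or.inr (Or.inl h1)
    by_cases h2 : a = v ∧ b = u
    · exact Or.inr (Or.inr h2)
    exact Or.inl ⟨h, h1, h2⟩
  · rintro (h | ⟨rfl, rfl⟩ | ⟨rfl, rfl⟩)
    · exact h.1
    · exact huv
    · exact huv.symm

lemma pc_delE (G : SimpleGraph V) {u v : V} (huv : G.Adj u v) (X : Finset V) :
    pc G X = pc (delE G u v) X + (if u ∈ X ∧ v ∈ X then 2 else 0) :=
  pc_edge_diff huv.ne (delE_not_adj G u v) (adj_iff_delE G huv) X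

section Rules

variable {n : ℕ} (G : SimpleGraph (Fin n)) (u v w : Fin n)

/-- The graph produced by Henneberg rule 1. -/
abbrev R1 : SimpleGraph (Fin (n + 1)) :=
  SimpleGraph.fromRel (fun a b =>
    (∃ a₀ b₀ : Fin n, a = a₀.castSucc ∧ b = b₀.castSucc ∧ G.Adj a₀ b₀) ∨
    (a = u.castSucc ∧ b = Fin.last n) ∨ (a = v.castSucc ∧ b = Fin.last n))

/-- The graph produced by Henneberg rule 2. -/
abbrev R2 : SimpleGraph (Fin (n + 1)) :=
  SimpleGraph.fromRel (fun a b =>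
    (∃ a₀ b₀ : Fin n, a = a₀.castSucc ∧ b = b₀.castSucc ∧ G.Adj a₀ b₀ ∧
      ¬(a₀ = u ∧ b₀ = v) ∧ ¬(a₀ = v ∧ b₀ = u)) ∨
    (a = u.castSucc ∧ b = Fin.last n) ∨ (a = v.castSucc ∧ b = Fin.last n) ∨
    (a = w.castSucc ∧ b = Fin.last n))

lemma R1_cast (a b : Fin n) : (R1 G u v).Adj a.castSucc b.castSucc ↔ G.Adj a b := by
  rw [SimpleGraph.fromRel_adj]
  constructor
  · rintro ⟨hne, (⟨a₀, b₀, ha, hb, hadj⟩ | ⟨-, hb⟩ | ⟨-, hb⟩) |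
      (⟨a₀, b₀, ha, hb, hadj⟩ | ⟨-, hb⟩ | ⟨-, hb⟩)⟩
    · obtain rfl := Fin.castSucc_injective n ha
      obtain rfl := Fin.castSucc_injective n hb
      exact hadj
    · exact absurd hb (Fin.castSucc_lt_last b).ne
    · exact absurd hb (Fin.castSucc_lt_last b).ne
    · obtain rfl := Fin.castSucc_injective n ha
      obtain rfl := Fin.castSucc_injective n hb
      exact hadj.symm
    · exact absurd hb (Fin.castSucc_lt_last a).ne
    · exact absurd hb (Fin.castSucc_lt_last a).ne
  · intro h
    exact ⟨fun hc => h.ne (Fin.castSucc_injective n hc),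
      Or.inl (Or.inl ⟨a, b, rfl, rfl, h⟩)⟩

lemma R1_last (a : Fin n) :
    (R1 G u v).Adj (Fin.last n) a.castSucc ↔ (a = u ∨ a = v) := by
  rw [SimpleGraph.fromRel_adj]
  constructor
  · rintro ⟨hne, (⟨a₀, b₀, ha, hb, hadj⟩ | ⟨ha, hb⟩ | ⟨ha, hb⟩) |
      (⟨a₀, b₀, ha, hb, hadj⟩ | ⟨ha, hb⟩ | ⟨ha, hb⟩)⟩
    · exact absurd ha.symm (Fin.castSucc_lt_last a₀).ne
    · exact absurd ha.symm (Fin.castSucc_lt_last u).ne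
    · exact absurd ha.symm (Fin.castSucc_lt_last v).ne
    · exact absurd hb.symm (Fin.castSucc_lt_last b₀).ne
    · exact Or.inl (Fin.castSucc_injective n ha)
    · exact Or.inr (Fin.castSucc_injective n ha)
  · rintro (rfl | rfl)
    · exact ⟨(Fin.castSucc_lt_last a).ne', Or.inr (Or.inr (Or.inl ⟨rfl, rfl⟩))⟩
    · exact ⟨(Fin.castSucc_lt_last a).ne', Or.inr (Or.inr (Or.inr ⟨rfl, rfl⟩))⟩

lemma R2_cast (a b : Fin n) :
    (R2 G u v w).Adj a.castSucc b.castSucc ↔ (delE G u v).Adj a b := by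
  rw [SimpleGraph.fromRel_adj]
  constructor
  · rintro ⟨hne, (⟨a₀, b₀, ha, hb, hadj, h1, h2⟩ | ⟨-, hb⟩ | ⟨-, hb⟩ | ⟨-, hb⟩) |
      (⟨a₀, b₀, ha, hb, hadj, h1, h2⟩ | ⟨-, hb⟩ | ⟨-, hb⟩ | ⟨-, hb⟩)⟩
    · obtain rfl := Fin.castSucc_injective n ha
      obtain rfl := Fin.castSucc_injective n hb
      exact ⟨hadj, h1, h2⟩
    · exact absurd hb (Fin.castSucc_lt_last b).ne
    · exact absurd hb (Fin.castSucc_lt_last b).ne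
    · exact absurd hb (Fin.castSucc_lt_last b).ne
    · obtain rfl := Fin.castSucc_injective n ha
      obtain rfl := Fin.castSucc_injective n hb
      exact ⟨hadj.symm, fun hc => h2 ⟨hc.2, hc.1⟩, fun hc => h1 ⟨hc.2, hc.1⟩⟩
    · exact absurd hb (Fin.castSucc_lt_last a).ne
    · exact absurd hb (Fin.castSucc_lt_last a).ne
    · exact absurd hb (Fin.castSucc_lt_last a).ne
  · intro h
    exact ⟨fun hc => h.1.ne (Fin.castSucc_injective n hc),
      Or.inl (Or.inl ⟨a, b, rfl, rfl, h.1, h.2.1, h.2.2⟩)⟩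

lemma R2_last (a : Fin n) :
    (R2 G u v w).Adj (Fin.last n) a.castSucc ↔ (a = u ∨ a = v ∨ a = w) := by
  rw [SimpleGraph.fromRel_adj]
  constructor
  · rintro ⟨hne, (⟨a₀, b₀, ha, hb, hadj⟩ | ⟨ha, hb⟩ | ⟨ha, hb⟩ | ⟨ha, hb⟩) |
      (⟨a₀, b₀, ha, hb, hadj⟩ | ⟨ha, hb⟩ | ⟨ha, hb⟩ | ⟨ha, hb⟩)⟩
    · exact absurd ha.symm (Fin.castSucc_lt_last a₀).ne
    · exact absurd ha.symm (Fin.castSucc_lt_last u).ne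
    · exact absurd ha.symm (Fin.castSucc_lt_last v).ne
    · exact absurd ha.symm (Fin.castSucc_lt_last w).ne
    · exact absurd hb.symm (Fin.castSucc_lt_last b₀).ne
    · exact Or.inl (Fin.castSucc_injective n ha)
    · exact Or.inr (Or.inl (Fin.castSucc_injective n ha))
    · exact Or.inr (Or.inr (Fin.castSucc_injective n ha))
  · rintro (rfl | rfl | rfl)
    · exact ⟨(Fin.castSucc_lt_last a).ne', Or.inr (Or.inr (Or.inl ⟨rfl, rfl⟩))⟩
    · exact ⟨(Fin.castSucc_lt_last a).ne', Or.inr (Or.inr (Or.inr (Or.inl ⟨rfl, rfl⟩)))⟩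
    · exact ⟨(Fin.castSucc_lt_last a).ne', Or.inr (Or.inr (Or.inr (Or.inr ⟨rfl, rfl⟩)))⟩

lemma lamanPC_R1 (huv : u ≠ v) (hG : LamanPC G) : LamanPC (R1 G u v) := by
  classical
  obtain ⟨hG1, hG2⟩ := hG
  have hfilt : ∀ Y : Finset (Fin n),
      (Y.filter fun y => (R1 G u v).Adj (Fin.last n) y.castSucc) ⊆ {u, v} := by
    intro Y y hy
    rcases (R1_last G u v y).1 (Finset.mem_filter.1 hy).2 with rfl | rfl <;> simp
  constructor
  · rw [pc_erase (R1 G u v) Finset.univ (Fin.last n) (Finset.mem_univ _), univ_erase_last,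
      pc_map (R1 G u v) G Fin.castSuccEmb (fun a b => (R1_cast G u v a b).symm)]
    simp only [Finset.filter_map, Finset.card_map]
    have h2 : (Finset.univ.filter ((R1 G u v).Adj (Fin.last n) ∘ ⇑Fin.castSuccEmb)) =
        {u, v} := by
      ext y
      rw [Finset.mem_filter]
      simp only [Finset.mem_filter, Finset.mem_univ, true_and, Finset.mem_insert,
        Finset.mem_singleton, Function.comp, Fin.coe_castSuccEmb]
      exact R1_last G u v y
    rw [Finset.filter_congr_decidable, h2, Finset.card_insert_of_notMem (by simpa using huv), Finset.card_singleton]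
    simp only [Fintype.card_fin] at hG1 ⊢
    omega
  · refine lamanPC_sub_of_ext (R1 G u v) G (R1_cast G u v) hG2 ?_
    intro Y hY2
    have hc : (Y.filter fun y => (R1 G u v).Adj (Fin.last n) y.castSucc).card ≤ 2 := by
      refine (Finset.card_le_card (hfilt Y)).trans ?_
      refine (Finset.card_insert_le _ _).trans ?_
      rw [Finset.card_singleton]
    have := hG2 Y hY2
    rw [Finset.filter_congr_decidable] at hc ⊢
    omega

lemma lamanPC_R2 (huv : u ≠ v) (huw : u ≠ w) (hvw : v ≠ w) (hadj : G.Adj u v)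
    (hG : LamanPC G) : LamanPC (R2 G u v w) := by
  classical
  obtain ⟨hG1, hG2⟩ := hG
  have hsub : ∀ Y : Finset (Fin n), 2 ≤ Y.card → pc (delE G u v) Y + 6 ≤ 4 * Y.card := by
    intro Y hY
    have := pc_mono_graph (fun a b h => h.1) Y (G := delE G u v) (H := G)
    have := hG2 Y hY
    omega
  have hfilt : ∀ Y : Finset (Fin n),
      (Y.filter fun y => (R2 G u v w).Adj (Fin.last n) y.castSucc) ⊆ {u, v, w} := by
    intro Y y hy
    rcases (R2_last G u v w y).1 (Finset.mem_filter.1 hy).2 with rfl | rfl | rfl <;> simp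
  constructor
  · rw [pc_erase (R2 G u v w) Finset.univ (Fin.last n) (Finset.mem_univ _), univ_erase_last,
      pc_map (R2 G u v w) (delE G u v) Fin.castSuccEmb (fun a b => (R2_cast G u v w a b).symm)]
    simp only [Finset.filter_map, Finset.card_map]
    have h3 : (Finset.univ.filter ((R2 G u v w).Adj (Fin.last n) ∘ ⇑Fin.castSuccEmb)) =
        {u, v, w} := by
      ext y
      rw [Finset.mem_filter]
      simp only [Finset.mem_filter, Finset.mem_univ, true_and, Finset.mem_insert,
        Finset.mem_singleton, Function.comp, Fin.coe_castSuccEmb]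
      exact R2_last G u v w y
    have hcard3 : ({u, v, w} : Finset (Fin n)).card = 3 := by
      rw [Finset.card_insert_of_notMem (by simp [huv, huw]),
        Finset.card_insert_of_notMem (by simpa using hvw), Finset.card_singleton]
    rw [Finset.filter_congr_decidable, h3, hcard3]
    have hdel := pc_delE G hadj Finset.univ
    rw [if_pos ⟨Finset.mem_univ u, Finset.mem_univ v⟩] at hdel
    simp only [Fintype.card_fin] at hG1 ⊢
    omega
  · refine lamanPC_sub_of_ext (R2 G u v w) (delE G u v) (R2_cast G u v w) hsub ?_
    intro Y hY2
    by_cases huvY : u ∈ Y ∧ v ∈ Y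
    · have hdel := pc_delE G hadj Y
      rw [if_pos huvY] at hdel
      have hc : (Y.filter fun y => (R2 G u v w).Adj (Fin.last n) y.castSucc).card ≤ 3 := by
        refine (Finset.card_le_card (hfilt Y)).trans ?_
        refine (Finset.card_insert_le _ _).trans ?_
        have h2 : ({v, w} : Finset (Fin n)).card ≤ 2 := by
          refine (Finset.card_insert_le _ _).trans ?_
          rw [Finset.card_singleton]
        omega
      have := hG2 Y hY2
      rw [Finset.filter_congr_decidable] at hc ⊢
      omega
    · have hc : (Y.filter fun y => (R2 G u v w).Adj (Fin.last n) y.castSucc).card ≤ 2 := by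
        rcases not_and_or.1 huvY with hu | hv
        · have hsub2 : (Y.filter fun y => (R2 G u v w).Adj (Fin.last n) y.castSucc) ⊆
              {v, w} := by
            intro y hy
            have hmem := (Finset.mem_filter.1 hy).1
            rcases (R2_last G u v w y).1 (Finset.mem_filter.1 hy).2 with rfl | rfl | rfl
            · exact absurd hmem hu
            · simp
            · simp
          refine (Finset.card_le_card hsub2).trans ?_
          refine (Finset.card_insert_le _ _).trans ?_
          rw [Finset.card_singleton]
        · have hsub2 : (Y.filter fun y => (R2 G u v w).Adj (Fin.last n) y.castSucc) ⊆
              {u, w} := by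
            intro y hy
            have hmem := (Finset.mem_filter.1 hy).1
            rcases (R2_last G u v w y).1 (Finset.mem_filter.1 hy).2 with rfl | rfl | rfl
            · simp
            · exact absurd hmem hv
            · simp
          refine (Finset.card_le_card hsub2).trans ?_
          refine (Finset.card_insert_le _ _).trans ?_
          rw [Finset.card_singleton]
      have := hsub Y hY2
      rw [Finset.filter_congr_decidable] at hc ⊢
      omega

end Rules

lemma lamanPC_iso {W : Type} [Fintype W] (G : SimpleGraph V) (G' : SimpleGraph W)
    (e : G ≃g G') (h : LamanPC G') : LamanPC G := by
  classical
  have hpc : ∀ X : Finset V, pc G X = pc G' (X.map e.toEquiv.toEmbedding) := by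
    intro X
    exact (pc_map G' G e.toEquiv.toEmbedding (fun a b => (e.map_adj_iff).symm) X).symm
  obtain ⟨h1, h2⟩ := h
  constructor
  · rw [hpc Finset.univ, Finset.map_univ_equiv, Fintype.card_congr e.toEquiv]
    exact h1
  · intro X hX
    have := h2 (X.map e.toEquiv.toEmbedding) (by rwa [Finset.card_map])
    rw [hpc X]
    rwa [Finset.card_map] at this

lemma lamanPC_base : LamanPC (⊤ : SimpleGraph (Fin 2)) := by
  have hadj : (⊤ : SimpleGraph (Fin 2)).Adj 0 1 := by
    rw [SimpleGraph.top_adj]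
    decide
  have hpc : pc (⊤ : SimpleGraph (Fin 2)) Finset.univ = 2 :=
    pc_pair _ (by decide) hadj Finset.univ (by decide)
  constructor
  · rw [hpc]
    simp
  · intro X hX
    have hXu : X = Finset.univ := Finset.eq_univ_of_card X
      (le_antisymm (by simpa using Finset.card_le_univ X) (by simpa using hX))
    rw [hXu, hpc]
    simp

lemma lamanPC_of_henneberg : ∀ {n : ℕ} {G : SimpleGraph (Fin n)}, Henneberg G → LamanPC G := by
  intro n G h
  induction h with
  | base => exact lamanPC_base
  | @rule1 n G u v huv h ih => exact lamanPC_R1 G u v huv ih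
  | @rule2 n G u v w huv huw hvw hadj h ih => exact lamanPC_R2 G u v w huv huw hvw hadj ih



/-- degree of a vertex as a filter count -/
def dg (G : SimpleGraph V) (t : V) : ℕ := (Finset.univ.filter (G.Adj t)).card

lemma filter_erase_adj [DecidableEq V] (G : SimpleGraph V) (t : V) :
    (Finset.univ.erase t).filter (G.Adj t) = Finset.univ.filter (G.Adj t) := by
  ext y
  simp only [Finset.mem_filter, Finset.mem_erase, Finset.mem_univ, true_and, and_true]
  exact ⟨fun h => h.2, fun h => ⟨(G.ne_of_adj h).symm, h⟩⟩

lemma pc_univ_erase [DecidableEq V] (G : SimpleGraph V) (t : V) :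
    pc G Finset.univ = pc G (Finset.univ.erase t) + 2 * dg G t := by
  rw [pc_erase G Finset.univ t (Finset.mem_univ t), filter_erase_adj]
  rfl

lemma lamanPC_card_ge_two (G : SimpleGraph V) (hL : LamanPC G) : 2 ≤ Fintype.card V := by
  by_contra h
  have h1 : (Finset.univ : Finset V).card ≤ 1 := by
    rw [Finset.card_univ]; omega
  have := pc_eq_zero_of_card_le_one G h1
  have := hL.1
  omega

lemma exists_deg_two_three (G : SimpleGraph V) (hL : LamanPC G)
    (h3 : 3 ≤ Fintype.card V) : ∃ t, dg G t = 2 ∨ dg G t = 3 := by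
  classical
  obtain ⟨hL1, hL2⟩ := hL
  have hle : ∃ t, dg G t ≤ 3 := by
    by_contra h
    push_neg at h
    have hsum : (Finset.univ : Finset V).card * 4 ≤ ∑ x : V, dg G x := by
      calc (Finset.univ : Finset V).card * 4 = ∑ _x : V, 4 := by
            rw [Finset.sum_const, smul_eq_mul]
      _ ≤ ∑ x : V, dg G x := Finset.sum_le_sum (fun x _ => h x)
    simp only [dg] at hsum
    rw [← pc_eq_sum] at hsum
    rw [Finset.card_univ] at hsum
    omega
  obtain ⟨t, ht⟩ := hle
  have hge : 2 ≤ dg G t := by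
    by_contra h
    push_neg at h
    have hcard : (Finset.univ.erase t).card = Fintype.card V - 1 := by
      rw [Finset.card_erase_of_mem (Finset.mem_univ t), Finset.card_univ]
    have hb := hL2 (Finset.univ.erase t) (by omega)
    have he := pc_univ_erase G t
    omega
  refine ⟨t, ?_⟩
  omega

lemma card_two_iso (G : SimpleGraph V) (hL : LamanPC G) (h2 : Fintype.card V = 2) :
    Nonempty (G ≃g (⊤ : SimpleGraph (Fin 2))) := by
  classical
  have hpc : pc G Finset.univ = 2 := by
    have := hL.1
    omega
  have hpos : 0 < ((Finset.univ ×ˢ Finset.univ).filter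
      fun p : V × V => G.Adj p.1 p.2).card := by
    have : pc G Finset.univ = ((Finset.univ ×ˢ Finset.univ).filter
      fun p : V × V => G.Adj p.1 p.2).card := rfl
    omega
  obtain ⟨pr, hpr⟩ := Finset.card_pos.1 hpos
  have hadj : G.Adj pr.1 pr.2 := (Finset.mem_filter.1 hpr).2
  have key : ∀ x y : V, x ≠ y → G.Adj x y := by
    intro x y hxy
    have hall : ∀ z : V, z = pr.1 ∨ z = pr.2 := by
      intro z
      by_contra hz
      push_neg at hz
      have hc3 : ({pr.1, pr.2, z} : Finset V).card = 3 := by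
        rw [Finset.card_insert_of_notMem (by
            simp only [Finset.mem_insert, Finset.mem_singleton]
            push_neg
            exact ⟨hadj.ne, fun h => hz.1 h.symm⟩),
          Finset.card_insert_of_notMem (by
            simp only [Finset.mem_singleton]
            exact fun h => hz.2 h.symm),
          Finset.card_singleton]
      have hle := Finset.card_le_univ ({pr.1, pr.2, z} : Finset V)
      rw [hc3] at hle
      omega
    rcases hall x with rfl | rfl <;> rcases hall y with rfl | rfl
    · exact absurd rfl hxy
    · exact hadj
    · exact hadj.symm
    · exact absurd rfl hxy
  have e := Fintype.equivFinOfCardEq h2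
  exact ⟨⟨e, by
    intro x y
    simp only [SimpleGraph.top_adj, ne_eq, EmbeddingLike.apply_eq_iff_eq]
    constructor
    · intro h
      exact key x y h
    · intro h
      exact h.ne⟩⟩

/-- the equivalence `V ≃ Fin (m+1)` extending `φ : {x // x ≠ t} ≃ Fin m` by `t ↦ last`. -/
def extEquiv {m : ℕ} (t : V) (φ : {x : V // x ≠ t} ≃ Fin m) : V ≃ Fin (m + 1) where
  toFun x := if h : x = t then Fin.last m else (φ ⟨x, h⟩).castSucc
  invFun i := if h : i = Fin.last m then t else (φ.symm (i.castPred h)).val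
  left_inv := by
    intro x
    dsimp only
    by_cases h : x = t
    · subst h
      rw [dif_pos rfl, dif_pos rfl]
    · rw [dif_neg h, dif_neg (Fin.castSucc_lt_last _).ne, Fin.castPred_castSucc,
        Equiv.symm_apply_apply]
  right_inv := by
    intro i
    dsimp only
    by_cases h : i = Fin.last m
    · subst h
      rw [dif_pos rfl, dif_pos rfl]
    · rw [dif_neg h, dif_neg (φ.symm (i.castPred h)).prop, Subtype.coe_eta,
        Equiv.apply_symm_apply, Fin.castSucc_castPred]

lemma extEquiv_apply_t {m : ℕ} (t : V) (φ : {x : V // x ≠ t} ≃ Fin m) :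
    extEquiv t φ t = Fin.last m := dif_pos rfl

lemma extEquiv_apply_ne {m : ℕ} (t : V) (φ : {x : V // x ≠ t} ≃ Fin m) (x : V) (h : x ≠ t) :
    extEquiv t φ x = (φ ⟨x, h⟩).castSucc := dif_neg h



/-- A tight set: the subgraph count is exactly `2|X| - 3` (doubled). -/
def Tight (G : SimpleGraph V) (X : Finset V) : Prop := pc G X + 6 = 4 * X.card

/-- A pair is blocked if it lies in a tight set avoiding `t`. -/
def Blocked (G : SimpleGraph V) (t p q : V) : Prop :=
  ∃ X : Finset V, t ∉ X ∧ p ∈ X ∧ q ∈ X ∧ Tight G X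

lemma tight_union (G : SimpleGraph V)
    (hL2 : ∀ X : Finset V, 2 ≤ X.card → pc G X + 6 ≤ 4 * X.card)
    {X Y : Finset V} (hX : Tight G X) (hY : Tight G Y) (h2 : 2 ≤ (X ∩ Y).card) :
    Tight G (X ∪ Y) := by
  classical
  have hsubm := pc_submod G X Y
  have hXY : 2 ≤ (X ∪ Y).card :=
    le_trans h2 (Finset.card_le_card ((Finset.inter_subset_left).trans
      Finset.subset_union_left))
  have hbU := hL2 (X ∪ Y) hXY
  have hbI := hL2 (X ∩ Y) h2
  have hcards := Finset.card_union_add_card_inter X Y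
  unfold Tight at hX hY ⊢
  omega

lemma tight_no_three (G : SimpleGraph V)
    (hL2 : ∀ X : Finset V, 2 ≤ X.card → pc G X + 6 ≤ 4 * X.card)
    {t a b c : V} {Z : Finset V} (htZ : t ∉ Z)
    (hab : a ≠ b) (hac : a ≠ c) (hbc : b ≠ c)
    (hta : G.Adj t a) (htb : G.Adj t b) (htc : G.Adj t c)
    (haZ : a ∈ Z) (hbZ : b ∈ Z) (hcZ : c ∈ Z) (hZ : Tight G Z) : False := by
  classical
  have herase : (insert t Z).erase t = Z := Finset.erase_insert htZ
  have hpc := pc_erase G (insert t Z) t (Finset.mem_insert_self t Z)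
  rw [herase] at hpc
  have hfil : ({a, b, c} : Finset V) ⊆ Z.filter (G.Adj t) := by
    intro y hy
    simp only [Finset.mem_insert, Finset.mem_singleton] at hy
    rcases hy with rfl | rfl | rfl <;> rw [Finset.mem_filter]
    exacts [⟨haZ, hta⟩, ⟨hbZ, htb⟩, ⟨hcZ, htc⟩]
  have hc3 : ({a, b, c} : Finset V).card = 3 := by
    rw [Finset.card_insert_of_notMem (by
        simp only [Finset.mem_insert, Finset.mem_singleton]
        push_neg
        exact ⟨hab, hac⟩),
      Finset.card_insert_of_notMem (by simpa using hbc), Finset.card_singleton]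
  have h3 : 3 ≤ (Z.filter (G.Adj t)).card := hc3 ▸ Finset.card_le_card hfil
  have hZ2 : 2 ≤ Z.card := by
    have : ({a, b} : Finset V) ⊆ Z := by
      intro y hy
      simp only [Finset.mem_insert, Finset.mem_singleton] at hy
      rcases hy with rfl | rfl
      exacts [haZ, hbZ]
    have h2 : ({a, b} : Finset V).card = 2 := by
      rw [Finset.card_insert_of_notMem (by simpa using hab), Finset.card_singleton]
    exact h2 ▸ Finset.card_le_card this
  have hcins : (insert t Z).card = Z.card + 1 := Finset.card_insert_of_notMem htZ
  have hb := hL2 (insert t Z) (by omega)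
  unfold Tight at hZ
  omega

lemma bad_to_tight (G : SimpleGraph V) {t p q : V} (hpq : p ≠ q)
    (hp : G.Adj t p) (hq : G.Adj t q)
    (h : G.Adj p q ∨ Blocked G t p q) :
    ∃ X : Finset V, t ∉ X ∧ p ∈ X ∧ q ∈ X ∧ Tight G X := by
  classical
  rcases h with h | h
  · refine ⟨{p, q}, ?_, by simp, by simp, ?_⟩
    · simp only [Finset.mem_insert, Finset.mem_singleton]
      push_neg
      exact ⟨hp.ne, fun he => hq.ne he⟩
    · unfold Tight
      rw [pc_pair G hpq h {p, q} (fun r => by simp),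
        Finset.card_insert_of_notMem (by simpa using hpq), Finset.card_singleton]
  · exact h

lemma pc_triple_le (G : SimpleGraph V) {X₁ X₂ X₃ : Finset V}
    (h12 : (X₁ ∩ X₂).card ≤ 1) (h13 : (X₁ ∩ X₃).card ≤ 1) (h23 : (X₂ ∩ X₃).card ≤ 1) :
    pc G X₁ + pc G X₂ + pc G X₃ ≤ pc G (X₁ ∪ X₂ ∪ X₃) := by
  classical
  set F : Finset V → Finset (V × V) :=
    fun X => (X ×ˢ X).filter (fun r => G.Adj r.1 r.2) with hF
  have hmono : ∀ {X Y : Finset V}, X ⊆ Y → F X ⊆ F Y := fun h =>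
    Finset.filter_subset_filter _ (Finset.product_subset_product h h)
  have hdisj : ∀ {X Y : Finset V}, (X ∩ Y).card ≤ 1 → Disjoint (F X) (F Y) := by
    intro X Y h
    rw [Finset.disjoint_left]
    intro r hr1 hr2
    simp only [hF, Finset.mem_filter, Finset.mem_product] at hr1 hr2
    have h1 : r.1 ∈ X ∩ Y := Finset.mem_inter.2 ⟨hr1.1.1, hr2.1.1⟩
    have h2 : r.2 ∈ X ∩ Y := Finset.mem_inter.2 ⟨hr1.1.2, hr2.1.2⟩
    exact hr1.2.ne (Finset.card_le_one.1 h _ h1 _ h2)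
  have hd3 : Disjoint (F X₁ ∪ F X₂) (F X₃) :=
    Finset.disjoint_union_left.2 ⟨hdisj h13, hdisj h23⟩
  have hsub : (F X₁ ∪ F X₂) ∪ F X₃ ⊆ F (X₁ ∪ X₂ ∪ X₃) := by
    refine Finset.union_subset (Finset.union_subset ?_ ?_) ?_ <;> apply hmono
    · exact Finset.subset_union_left.trans Finset.subset_union_left
    · exact Finset.subset_union_right.trans Finset.subset_union_left
    · exact Finset.subset_union_right
  calc pc G X₁ + pc G X₂ + pc G X₃
      = (F X₁).card + (F X₂).card + (F X₃).card := rfl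
    _ = ((F X₁ ∪ F X₂) ∪ F X₃).card := by
        rw [Finset.card_union_of_disjoint hd3, Finset.card_union_of_disjoint (hdisj h12)]
    _ ≤ (F (X₁ ∪ X₂ ∪ X₃)).card := Finset.card_le_card hsub
    _ = pc G (X₁ ∪ X₂ ∪ X₃) := rfl

lemma exists_good_pair (G : SimpleGraph V) (hL : LamanPC G) {t a b c : V}
    (hab : a ≠ b) (hac : a ≠ c) (hbc : b ≠ c)
    (hta : G.Adj t a) (htb : G.Adj t b) (htc : G.Adj t c) :
    ∃ p q r : V, p ≠ q ∧ p ≠ r ∧ q ≠ r ∧ G.Adj t p ∧ G.Adj t q ∧ G.Adj t r ∧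
      ({p, q, r} : Finset V) = {a, b, c} ∧ ¬G.Adj p q ∧ ¬Blocked G t p q := by
  classical
  have hL2 := hL.2
  by_cases Bab : G.Adj a b ∨ Blocked G t a b
  case neg =>
    push_neg at Bab
    exact ⟨a, b, c, hab, hac, hbc, hta, htb, htc, rfl, Bab.1, Bab.2⟩
  by_cases Bac : G.Adj a c ∨ Blocked G t a c
  case neg =>
    push_neg at Bac
    refine ⟨a, c, b, hac, hab, hbc.symm, hta, htc, htb, ?_, Bac.1, Bac.2⟩
    ext y
    simp only [Finset.mem_insert, Finset.mem_singleton]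
    tauto
  by_cases Bbc : G.Adj b c ∨ Blocked G t b c
  case neg =>
    push_neg at Bbc
    refine ⟨b, c, a, hbc, hab.symm, hac.symm, htb, htc, hta, ?_, Bbc.1, Bbc.2⟩
    ext y
    simp only [Finset.mem_insert, Finset.mem_singleton]
    tauto
  exfalso
  obtain ⟨X₁, ht1, ha1, hb1, hT1⟩ := bad_to_tight G hab hta htb Bab
  obtain ⟨X₂, ht2, ha2, hc2, hT2⟩ := bad_to_tight G hac hta htc Bac
  obtain ⟨X₃, ht3, hb3, hc3, hT3⟩ := bad_to_tight G hbc htb htc Bbc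
  by_cases h12 : 2 ≤ (X₁ ∩ X₂).card
  · exact tight_no_three G hL2 (by simp [ht1, ht2]) hab hac hbc hta htb htc
      (Finset.mem_union_left _ ha1) (Finset.mem_union_left _ hb1)
      (Finset.mem_union_right _ hc2) (tight_union G hL2 hT1 hT2 h12)
  by_cases h13 : 2 ≤ (X₁ ∩ X₃).card
  · exact tight_no_three G hL2 (by simp [ht1, ht3]) hab hac hbc hta htb htc
      (Finset.mem_union_left _ ha1) (Finset.mem_union_left _ hb1)
      (Finset.mem_union_right _ hc3) (tight_union G hL2 hT1 hT3 h13)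
  by_cases h23 : 2 ≤ (X₂ ∩ X₃).card
  · exact tight_no_three G hL2 (by simp [ht2, ht3]) hab hac hbc hta htb htc
      (Finset.mem_union_left _ ha2) (Finset.mem_union_right _ hb3)
      (Finset.mem_union_left _ hc2) (tight_union G hL2 hT2 hT3 h23)
  push_neg at h12 h13 h23
  have e12 : X₁ ∩ X₂ = {a} := by
    have ha : a ∈ X₁ ∩ X₂ := Finset.mem_inter.2 ⟨ha1, ha2⟩
    refine Finset.eq_singleton_iff_unique_mem.2 ⟨ha, fun y hy => ?_⟩
    exact Finset.card_le_one.1 (by omega) _ hy _ ha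
  have e13 : X₁ ∩ X₃ = {b} := by
    have hb : b ∈ X₁ ∩ X₃ := Finset.mem_inter.2 ⟨hb1, hb3⟩
    refine Finset.eq_singleton_iff_unique_mem.2 ⟨hb, fun y hy => ?_⟩
    exact Finset.card_le_one.1 (by omega) _ hy _ hb
  have e23 : X₂ ∩ X₃ = {c} := by
    have hc : c ∈ X₂ ∩ X₃ := Finset.mem_inter.2 ⟨hc2, hc3⟩
    refine Finset.eq_singleton_iff_unique_mem.2 ⟨hc, fun y hy => ?_⟩
    exact Finset.card_le_one.1 (by omega) _ hy _ hc
  have hinter : (X₁ ∪ X₂) ∩ X₃ = {b, c} := by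
    rw [Finset.union_inter_distrib_right, e13, e23]
    rfl
  have hcard12 : (X₁ ∪ X₂).card + 1 = X₁.card + X₂.card := by
    have := Finset.card_union_add_card_inter X₁ X₂
    rw [e12, Finset.card_singleton] at this
    omega
  have hcardU : (X₁ ∪ X₂ ∪ X₃).card + 2 = (X₁ ∪ X₂).card + X₃.card := by
    have := Finset.card_union_add_card_inter (X₁ ∪ X₂) X₃
    rw [hinter, Finset.card_insert_of_notMem (by simpa using hbc),
      Finset.card_singleton] at this
    omega
  have htr := pc_triple_le G (X₁ := X₁) (X₂ := X₂) (X₃ := X₃) (by omega) (by omega) (by omega)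
  have hU2 : 2 ≤ (X₁ ∪ X₂ ∪ X₃).card := by
    have hsub : ({a, b} : Finset V) ⊆ X₁ ∪ X₂ ∪ X₃ := by
      intro y hy
      simp only [Finset.mem_insert, Finset.mem_singleton] at hy
      rcases hy with rfl | rfl
      · exact Finset.mem_union_left _ (Finset.mem_union_left _ ha1)
      · exact Finset.mem_union_left _ (Finset.mem_union_left _ hb1)
    have h2 : ({a, b} : Finset V).card = 2 := by
      rw [Finset.card_insert_of_notMem (by simpa using hab), Finset.card_singleton]
    exact h2 ▸ Finset.card_le_card hsub
  have hup := hL2 (X₁ ∪ X₂ ∪ X₃) hU2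
  have hUT : Tight G (X₁ ∪ X₂ ∪ X₃) := by
    unfold Tight at hT1 hT2 hT3 ⊢
    omega
  exact tight_no_three G hL2 (by simp [ht1, ht2, ht3]) hab hac hbc hta htb htc
    (Finset.mem_union_left _ (Finset.mem_union_left _ ha1))
    (Finset.mem_union_left _ (Finset.mem_union_left _ hb1))
    (Finset.mem_union_right _ hc3) hUT



lemma map_subtype_univ [DecidableEq V] (t : V) :
    (Finset.univ : Finset {x : V // x ≠ t}).map (Function.Embedding.subtype _) =
      Finset.univ.erase t := by
  ext y
  constructor
  · intro hy
    obtain ⟨x, -, rfl⟩ := Finset.mem_map.1 hy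
    exact Finset.mem_erase.2 ⟨x.prop, Finset.mem_univ _⟩
  · intro hy
    exact Finset.mem_map.2 ⟨⟨y, (Finset.mem_erase.1 hy).1⟩, Finset.mem_univ _, rfl⟩

lemma pc_comap [DecidableEq V] (G : SimpleGraph V) (t : V)
    (Y : Finset {x : V // x ≠ t}) :
    pc (G.comap (Subtype.val : {x : V // x ≠ t} → V)) Y =
      pc G (Y.map (Function.Embedding.subtype _)) :=
  (pc_map G (G.comap (Subtype.val : {x : V // x ≠ t} → V))
    (Function.Embedding.subtype _) (fun _ _ => Iff.rfl) Y).symm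

lemma card_subtype_ne [DecidableEq V] (t : V) :
    Fintype.card {x : V // x ≠ t} = Fintype.card V - 1 := by
  have h := map_subtype_univ (V := V) t
  have := congrArg Finset.card h
  rw [Finset.card_map, Finset.card_erase_of_mem (Finset.mem_univ t)] at this
  rw [← Finset.card_univ, this, Finset.card_univ]

lemma not_mem_map_subtype [DecidableEq V] (t : V) (Y : Finset {x : V // x ≠ t}) :
    t ∉ Y.map (Function.Embedding.subtype _) := by
  intro h
  obtain ⟨x, -, hx⟩ := Finset.mem_map.1 h
  exact x.prop hx

lemma lamanPC_comap_sub [DecidableEq V] (G : SimpleGraph V) (hL : LamanPC G) (t : V) :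
    ∀ Y : Finset {x : V // x ≠ t}, 2 ≤ Y.card →
      pc (G.comap (Subtype.val : {x : V // x ≠ t} → V)) Y + 6 ≤ 4 * Y.card := by
  intro Y hY
  rw [pc_comap]
  have := hL.2 (Y.map (Function.Embedding.subtype _)) (by rwa [Finset.card_map])
  rwa [Finset.card_map] at this

lemma pc_comap_univ [DecidableEq V] (G : SimpleGraph V) (hL : LamanPC G) (t : V) :
    pc (G.comap (Subtype.val : {x : V // x ≠ t} → V)) Finset.univ + 6 + 2 * dg G t =
      4 * Fintype.card V := by
  rw [pc_comap, map_subtype_univ]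
  have h := pc_univ_erase G t
  have := hL.1
  omega

theorem lamanPC_to_henneberg (N : ℕ) :
    ∀ (V : Type) [inst : Fintype V] (G : SimpleGraph V), Fintype.card V = N → LamanPC G →
      ∃ (n : ℕ) (G' : SimpleGraph (Fin n)), Henneberg G' ∧ Nonempty (G ≃g G') := by
  induction N using Nat.strong_induction_on with
  | _ N IH =>
  intro V instV G hcard hL
  classical
  have h2 : 2 ≤ N := hcard ▸ lamanPC_card_ge_two G hL
  by_cases hN2 : N = 2
  · obtain ⟨iso⟩ := card_two_iso G hL (by omega)
    exact ⟨2, ⊤, Henneberg.base, ⟨iso⟩⟩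
  have h3 : 3 ≤ Fintype.card V := by omega
  obtain ⟨t, hdg⟩ := exists_deg_two_three G hL h3
  have hcardW : Fintype.card {x : V // x ≠ t} = N - 1 := by
    rw [card_subtype_ne, hcard]
  rcases hdg with hdg | hdg
  -- ============ degree 2 case ============
  · obtain ⟨a, b, hab, hnbr⟩ := Finset.card_eq_two.1 hdg
    have hta : G.Adj t a := by
      have : a ∈ Finset.univ.filter (G.Adj t) := by rw [hnbr]; simp
      exact (Finset.mem_filter.1 this).2
    have htb : G.Adj t b := by
      have : b ∈ Finset.univ.filter (G.Adj t) := by rw [hnbr]; simp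
      exact (Finset.mem_filter.1 this).2
    set G₁ := G.comap (Subtype.val : {x : V // x ≠ t} → V) with hG₁
    have hL₁ : LamanPC G₁ := by
      constructor
      · have h' := pc_comap_univ G hL t
        rw [hdg, ← hG₁] at h'
        rw [hcardW]
        omega
      · intro Y hY
        have h' := lamanPC_comap_sub G hL t Y hY
        rwa [← hG₁] at h'
    obtain ⟨m, G'', hHen, ⟨φ⟩⟩ := IH (N - 1) (by omega) _ G₁ hcardW hL₁
    set φe : {x : V // x ≠ t} ≃ Fin m := φ.toEquiv with hφe
    set u' : Fin m := φe ⟨a, hta.ne'⟩ with hu'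
    set v' : Fin m := φe ⟨b, htb.ne'⟩ with hv'
    have huv : u' ≠ v' := by
      intro h
      have := φe.injective h
      rw [Subtype.mk_eq_mk] at this
      exact hab this
    refine ⟨m + 1, R1 G'' u' v', Henneberg.rule1 u' v' huv hHen, ⟨⟨extEquiv t φe, ?_⟩⟩⟩
    intro x y
    have key : ∀ z : V, ∀ hz : z ≠ t,
        ((R1 G'' u' v').Adj (Fin.last m) (φe ⟨z, hz⟩).castSucc ↔ G.Adj t z) := by
      intro z hz
      rw [R1_last]
      constructor
      · rintro (h | h)
        · have h' := φe.injective h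
          rw [Subtype.mk_eq_mk] at h'
          rw [h']
          exact hta
        · have h' := φe.injective h
          rw [Subtype.mk_eq_mk] at h'
          rw [h']
          exact htb
      · intro h
        have hmem : z ∈ Finset.univ.filter (G.Adj t) :=
          Finset.mem_filter.2 ⟨Finset.mem_univ _, h⟩
        rw [hnbr] at hmem
        simp only [Finset.mem_insert, Finset.mem_singleton] at hmem
        rcases hmem with rfl | rfl
        · exact Or.inl rfl
        · exact Or.inr rfl
    by_cases hx : x = t <;> by_cases hy : y = t
    · subst hx; subst hy
      rw [extEquiv_apply_t]
      exact iff_of_false (fun h => h.ne rfl) (fun h => h.ne rfl)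
    · subst hx
      rw [extEquiv_apply_t, extEquiv_apply_ne _ φe y hy]
      exact key y hy
    · subst hy
      rw [extEquiv_apply_t, extEquiv_apply_ne _ φe x hx, SimpleGraph.adj_comm,
        G.adj_comm]
      exact key x hx
    · rw [extEquiv_apply_ne _ φe x hx, extEquiv_apply_ne _ φe y hy, R1_cast]
      exact φ.map_adj_iff
  -- ============ degree 3 case ============
  · obtain ⟨a, b, c, hab, hac, hbc, hnbr0⟩ := Finset.card_eq_three.1 hdg
    have hmem3 : ∀ z ∈ ({a, b, c} : Finset V), G.Adj t z := by
      intro z hz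
      have : z ∈ Finset.univ.filter (G.Adj t) := by rw [hnbr0]; exact hz
      exact (Finset.mem_filter.1 this).2
    have hta : G.Adj t a := hmem3 a (by simp)
    have htb : G.Adj t b := hmem3 b (by simp)
    have htc : G.Adj t c := hmem3 c (by simp)
    obtain ⟨p, q, r, hpq, hpr, hqr, htp, htq, htr, hset, hnadj, hnblk⟩ :=
      exists_good_pair G hL hab hac hbc hta htb htc
    have hnbr : Finset.univ.filter (G.Adj t) = {p, q, r} := by rw [hnbr0, ← hset]
    set G₁ := G.comap (Subtype.val : {x : V // x ≠ t} → V) with hG₁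
    set p' : {x : V // x ≠ t} := ⟨p, htp.ne'⟩ with hp'
    set q' : {x : V // x ≠ t} := ⟨q, htq.ne'⟩ with hq'
    set r' : {x : V // x ≠ t} := ⟨r, htr.ne'⟩ with hr'
    have hp'q' : p' ≠ q' := by
      rw [hp', hq', Ne, Subtype.mk_eq_mk]; exact hpq
    set G₂ : SimpleGraph {x : V // x ≠ t} :=
      { Adj := fun x y => G₁.Adj x y ∨ ((x = p' ∧ y = q') ∨ (x = q' ∧ y = p'))
        symm := by
          refine ⟨?_⟩
          rintro x y (h | ⟨h1, h2⟩ | ⟨h1, h2⟩)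
          · exact Or.inl h.symm
          · exact Or.inr (Or.inr ⟨h2, h1⟩)
          · exact Or.inr (Or.inl ⟨h2, h1⟩)
        loopless := by
          refine ⟨?_⟩
          rintro x (h | ⟨h1, h2⟩ | ⟨h1, h2⟩)
          · exact G.irrefl h
          · exact hp'q' (h1 ▸ h2 ▸ rfl)
          · exact hp'q' (h2 ▸ h1 ▸ rfl) } with hG₂
    have hG₁nadj : ¬G₁.Adj p' q' := hnadj
    have hdiff := pc_edge_diff (G := G₂) (H := G₁) hp'q' hG₁nadj (fun _ _ => Iff.rfl)
    have hL₂ : LamanPC G₂ := by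
      constructor
      · rw [hdiff Finset.univ, if_pos ⟨Finset.mem_univ _, Finset.mem_univ _⟩]
        have h' := pc_comap_univ G hL t
        rw [hdg, ← hG₁] at h'
        rw [hcardW]
        omega
      · intro Y hY
        rw [hdiff Y]
        by_cases hmem : p' ∈ Y ∧ q' ∈ Y
        · rw [if_pos hmem]
          set Y' := Y.map (Function.Embedding.subtype _) with hY'
          have hpcY : pc G₁ Y = pc G Y' := pc_comap G t Y
          have hcY : Y'.card = Y.card := Finset.card_map _
          have hple := hL.2 Y' (by omega)
          have hne : pc G Y' + 6 ≠ 4 * Y'.card := by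
            intro hTight
            exact hnblk ⟨Y', not_mem_map_subtype t Y,
              Finset.mem_map.2 ⟨p', hmem.1, rfl⟩,
              Finset.mem_map.2 ⟨q', hmem.2, rfl⟩, hTight⟩
          obtain ⟨k, hk⟩ := pc_even G Y'
          omega
        · rw [if_neg hmem]
          have h' := lamanPC_comap_sub G hL t Y hY
          rw [← hG₁] at h'
          omega
    obtain ⟨m, G'', hHen, ⟨φ⟩⟩ := IH (N - 1) (by omega) _ G₂ hcardW hL₂
    set φe : {x : V // x ≠ t} ≃ Fin m := φ.toEquiv with hφe
    set u' : Fin m := φe p' with hu'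
    set v' : Fin m := φe q' with hv'
    set w' : Fin m := φe r' with hw'
    have hu'v' : u' ≠ v' := fun h => hpq (Subtype.mk_eq_mk.1 (φe.injective h))
    have hu'w' : u' ≠ w' := fun h => hpr (Subtype.mk_eq_mk.1 (φe.injective h))
    have hv'w' : v' ≠ w' := fun h => hqr (Subtype.mk_eq_mk.1 (φe.injective h))
    have hadj'' : G''.Adj u' v' := φ.map_adj_iff.2 (Or.inr (Or.inl ⟨rfl, rfl⟩))
    refine ⟨m + 1, R2 G'' u' v' w',
      Henneberg.rule2 u' v' w' hu'v' hu'w' hv'w' hadj'' hHen, ⟨⟨extEquiv t φe, ?_⟩⟩⟩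
    intro x y
    have key : ∀ z : V, ∀ hz : z ≠ t,
        ((R2 G'' u' v' w').Adj (Fin.last m) (φe ⟨z, hz⟩).castSucc ↔ G.Adj t z) := by
      intro z hz
      rw [R2_last]
      constructor
      · rintro (h | h | h) <;>
        · have h' := Subtype.mk_eq_mk.1 (φe.injective h)
          rw [h']
          first | exact htp | exact htq | exact htr
      · intro h
        have hmem : z ∈ Finset.univ.filter (G.Adj t) :=
          Finset.mem_filter.2 ⟨Finset.mem_univ _, h⟩
        rw [hnbr] at hmem
        simp only [Finset.mem_insert, Finset.mem_singleton] at hmem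
        rcases hmem with rfl | rfl | rfl
        · exact Or.inl rfl
        · exact Or.inr (Or.inl rfl)
        · exact Or.inr (Or.inr rfl)
    by_cases hx : x = t <;> by_cases hy : y = t
    · subst hx; subst hy
      rw [extEquiv_apply_t]
      exact iff_of_false (fun h => h.ne rfl) (fun h => h.ne rfl)
    · subst hx
      rw [extEquiv_apply_t, extEquiv_apply_ne _ φe y hy]
      exact key y hy
    · subst hy
      rw [extEquiv_apply_t, extEquiv_apply_ne _ φe x hx, SimpleGraph.adj_comm,
        G.adj_comm]
      exact key x hx
    · rw [extEquiv_apply_ne _ φe x hx, extEquiv_apply_ne _ φe y hy, R2_cast]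
      constructor
      · rintro ⟨hGadj, h1, h2⟩
        have hG2 : G₂.Adj ⟨x, hx⟩ ⟨y, hy⟩ := φ.map_adj_iff.1 hGadj
        rcases hG2 with h | ⟨e1, e2⟩ | ⟨e1, e2⟩
        · exact h
        · exact absurd ⟨e1 ▸ rfl, e2 ▸ rfl⟩ h1
        · exact absurd ⟨e1 ▸ rfl, e2 ▸ rfl⟩ h2
      · intro h
        refine ⟨φ.map_adj_iff.2 (Or.inl h), ?_, ?_⟩
        · rintro ⟨e1, e2⟩
          have e1' : (⟨x, hx⟩ : {x : V // x ≠ t}) = p' := φe.injective e1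
          have e2' : (⟨y, hy⟩ : {x : V // x ≠ t}) = q' := φe.injective e2
          rw [Subtype.mk_eq_mk] at e1' e2'
          exact hnadj (e1' ▸ e2' ▸ h)
        · rintro ⟨e1, e2⟩
          have e1' : (⟨x, hx⟩ : {x : V // x ≠ t}) = q' := φe.injective e1
          have e2' : (⟨y, hy⟩ : {x : V // x ≠ t}) = p' := φe.injective e2
          rw [Subtype.mk_eq_mk] at e1' e2'
          exact hnadj (e2' ▸ e1' ▸ h).symm


/-- A (finite connected simple) graph is a Laman graph if and only if it
can be constructed, up to isomorphism, from the graph consisting of two vertices joined by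
a single edge by a finite sequence of applications of the two Henneberg rules. -/
theorem statement2 {V : Type} [Fintype V] (G : SimpleGraph V) (hconn : G.Connected) :
    LamanCond G ↔
      ∃ (n : ℕ) (G' : SimpleGraph (Fin n)), Henneberg G' ∧ Nonempty (G ≃g G') := by
  constructor
  · intro hL
    exact lamanPC_to_henneberg (Fintype.card V) V G rfl ((lamanCond_iff_lamanPC G).1 hL)
  · rintro ⟨n, G', hHen, ⟨iso⟩⟩
    exact (lamanCond_iff_lamanPC G).2 (lamanPC_iso G G' iso (lamanPC_of_henneberg hHen))

end LamanGraphs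
end
end

section
/- Let B=(G,H) be a bigraph with biedge set ℰ without self-loops, fix a biedge ē∈ℰ and λ∈ℂ^{ℰ∖{ē}}, and let p∈ℙ(ℂ^ℰ) be the class of the vector whose ē-coordinate is 1 and whose e-coordinate is λ_e for e∈ℰ∖{ē}. Then there is a bijection between the fiber f_B^{-1}(p) (the set of points of ℙ(ℂ^V/L_G)×ℙ(ℂ^W/L_H) at which f_B is defined and takes the value p) and the affine solution set Z^B(λ). -/
set_option maxHeartbeats 1000000

noncomputable section
open Classical

namespace LamanPaper

variable {V E : Type}

/-- The adjacency relation induced by an incidence map `ends`. -/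
def adjRel (ends : E → Sym2 V) : V → V → Prop := fun u v => ∃ e : E, ends e = s(u, v)

/-- The setoid of connected components of the graph with incidence map `ends`. -/
def ccSetoid (ends : E → Sym2 V) : Setoid V :=
  ⟨Relation.EqvGen (adjRel ends), Relation.EqvGen.is_equivalence _⟩

/-- The number of connected components. -/
def numCC (ends : E → Sym2 V) : ℕ := Nat.card (Quotient (ccSetoid ends))

/-- The dimension of a graph: number of vertices minus number of connected components. -/
def gDim (ends : E → Sym2 V) : ℕ := Nat.card V - numCC ends

/-- Restriction of a graph to a set of edges. -/
def restrictEnds (ends : E → Sym2 V) (S : Set E) : {e : E // e ∈ S} → Sym2 V :=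
  fun e => ends e.1

/-- Deletion of a set of edges from a graph. -/
def deleteEnds (ends : E → Sym2 V) (S : Set E) : {e : E // e ∉ S} → Sym2 V :=
  fun e => ends e.1

/-- The setoid on vertices generated by contracting the edges in `S`. -/
def contrSetoid (ends : E → Sym2 V) (S : Set E) : Setoid V :=
  ⟨Relation.EqvGen fun u v => ∃ e ∈ S, ends e = s(u, v), Relation.EqvGen.is_equivalence _⟩

/-- Contraction of the edges in `S`: the remaining edges join the equivalence classes of
their endpoints. -/
def contractEnds (ends : E → Sym2 V) (S : Set E) :
    {e : E // e ∉ S} → Sym2 (Quotient (contrSetoid ends S)) :=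
  fun e => (ends e.1).map (Quotient.mk (contrSetoid ends S))

/-- An edge is a bridge if deleting it increases the number of connected components. -/
def IsBridge (ends : E → Sym2 V) (e : E) : Prop :=
  numCC ends < numCC (deleteEnds ends ({e} : Set E))

/-- The smaller endpoint of an (unordered) edge, with respect to a linear order. -/
def sMin [LinearOrder V] (s : Sym2 V) : V :=
  Sym2.lift ⟨fun a b => min a b, fun a b => min_comm a b⟩ s

/-- The larger endpoint of an (unordered) edge, with respect to a linear order. -/
def sMax [LinearOrder V] (s : Sym2 V) : V :=
  Sym2.lift ⟨fun a b => max a b, fun a b => max_comm a b⟩ s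

theorem sMin_mem [LinearOrder V] (s : Sym2 V) : sMin s ∈ s := by
  induction s using Sym2.ind with
  | _ x y => rcases min_choice x y with h | h <;> simp [sMin, Sym2.lift_mk, h, Sym2.mem_iff]

theorem sMax_mem [LinearOrder V] (s : Sym2 V) : sMax s ∈ s := by
  induction s using Sym2.ind with
  | _ x y => rcases max_choice x y with h | h <;> simp [sMax, Sym2.lift_mk, h, Sym2.mem_iff]

/-- A bigraph: a pair of finite multigraphs `G = (V, ℰ)` and `H = (W, ℰ)` sharing the same
set of (bi)edges, together with fixed total orders on the two vertex sets. -/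
structure Bigraph where
  ℰ : Type
  V : Type
  W : Type
  finE : Finite ℰ
  finV : Finite V
  finW : Finite W
  τG : ℰ → Sym2 V
  τH : ℰ → Sym2 W
  ordV : LinearOrder V
  ordW : LinearOrder W

namespace Bigraph

variable (B : Bigraph)

instance : Finite B.ℰ := B.finE
instance : Finite B.V := B.finV
instance : Finite B.W := B.finW

/-- The dimension of the first graph of a bigraph. -/
def dimG : ℕ := gDim B.τG

/-- The dimension of the second graph of a bigraph. -/
def dimH : ℕ := gDim B.τH

/-- A bigraph is pseudo-Laman if `dim G + dim H = |ℰ| + 1`. -/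
def PseudoLaman : Prop := B.dimG + B.dimH = Nat.card B.ℰ + 1

/-- A bigraph has a (self-)loop if some biedge is a self-loop in `G` or in `H`. -/
def HasLoop : Prop := (∃ e, (B.τG e).IsDiag) ∨ (∃ e, (B.τH e).IsDiag)

/-- The set `P` of ordered pairs of distinct vertices of `G` joined by some edge. -/
def Pset : Set (B.V × B.V) := {p | p.1 ≠ p.2 ∧ ∃ e, B.τG e = s(p.1, p.2)}

/-- The set `Q` of ordered pairs of distinct vertices of `H` joined by some edge. -/
def Qset : Set (B.W × B.W) := {q | q.1 ≠ q.2 ∧ ∃ e, B.τH e = s(q.1, q.2)}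

/-- The smaller endpoint (w.r.t. the fixed total order) of a biedge in `G`. -/
def eFstG (e : B.ℰ) : B.V := letI := B.ordV; sMin (B.τG e)

/-- The larger endpoint of a biedge in `G`. -/
def eSndG (e : B.ℰ) : B.V := letI := B.ordV; sMax (B.τG e)

/-- The smaller endpoint of a biedge in `H`. -/
def eFstH (e : B.ℰ) : B.W := letI := B.ordW; sMin (B.τH e)

/-- The larger endpoint of a biedge in `H`. -/
def eSndH (e : B.ℰ) : B.W := letI := B.ordW; sMax (B.τH e)

theorem eFstG_mem (e : B.ℰ) : B.eFstG e ∈ B.τG e := by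
  letI := B.ordV; exact sMin_mem _

theorem eSndG_mem (e : B.ℰ) : B.eSndG e ∈ B.τG e := by
  letI := B.ordV; exact sMax_mem _

theorem eFstH_mem (e : B.ℰ) : B.eFstH e ∈ B.τH e := by
  letI := B.ordW; exact sMin_mem _

theorem eSndH_mem (e : B.ℰ) : B.eSndH e ∈ B.τH e := by
  letI := B.ordW; exact sMax_mem _

/-- The affine solution set `Z^B(λ)` of a bigraph with distinguished biedge `ebar` and
parameters `lam`. -/
def ZSet (ebar : B.ℰ) (lam : {e : B.ℰ // e ≠ ebar} → ℂ) :
    Set ((↥B.Pset → ℂ) × (↥B.Qset → ℂ)) :=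
  {xy |
    (∀ p : ↥B.Pset, (p : B.V × B.V) = (B.eFstG ebar, B.eSndG ebar) → xy.1 p = 1) ∧
    (∀ q : ↥B.Qset, (q : B.W × B.W) = (B.eFstH ebar, B.eSndH ebar) → xy.2 q = 1) ∧
    (∀ e : {e : B.ℰ // e ≠ ebar}, ∀ p : ↥B.Pset, ∀ q : ↥B.Qset,
      (p : B.V × B.V) = (B.eFstG e.1, B.eSndG e.1) →
      (q : B.W × B.W) = (B.eFstH e.1, B.eSndH e.1) →
      xy.1 p * xy.2 q = lam e) ∧
    (∀ (n : ℕ) (u : ℕ → B.V) (w : Fin n → ↥B.Pset),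
      (∀ i : Fin n, (w i : B.V × B.V) = (u i.1, u (i.1 + 1))) → u n = u 0 →
      ∑ i, xy.1 (w i) = 0) ∧
    (∀ (n : ℕ) (u : ℕ → B.W) (w : Fin n → ↥B.Qset),
      (∀ i : Fin n, (w i : B.W × B.W) = (u i.1, u (i.1 + 1))) → u n = u 0 →
      ∑ i, xy.2 (w i) = 0)}

/-- `B` has Laman number `N` with respect to the biedge `ebar`:  there is a nonzero
polynomial `p` in the parameters such that whenever `p` does not vanish, the solution set
`Z^B(λ)` has exactly `N` elements.  By convention a bigraph containing a self-loop has
Laman number `0`. -/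
def HasLamanNumber (ebar : B.ℰ) (N : ℕ) : Prop :=
  (B.HasLoop ∧ N = 0) ∨
  (¬ B.HasLoop ∧ ∃ P : MvPolynomial {e : B.ℰ // e ≠ ebar} ℂ, P ≠ 0 ∧
    ∀ lam : {e : B.ℰ // e ≠ ebar} → ℂ, MvPolynomial.eval lam P ≠ 0 →
      (B.ZSet ebar lam).Finite ∧ Nat.card ↥(B.ZSet ebar lam) = N)

/-- The bigraph obtained by restricting the biedges to a subset `S` (both in `G` and `H`). -/
def restrict (S : Set B.ℰ) : Bigraph where
  ℰ := {e : B.ℰ // e ∈ S}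
  V := B.V
  W := B.W
  finE := Subtype.finite
  finV := B.finV
  finW := B.finW
  τG := fun e => B.τG e.1
  τH := fun e => B.τH e.1
  ordV := B.ordV
  ordW := B.ordW

/-- The bigraph `^M B = (G / M, H ∖ M)`: contract the biedges of `M` in `G` and delete them
in `H`. -/
def ctrG (M : Set B.ℰ) (ord : LinearOrder (Quotient (contrSetoid B.τG M))) : Bigraph where
  ℰ := {e : B.ℰ // e ∉ M}
  V := Quotient (contrSetoid B.τG M)
  W := B.W
  finE := Subtype.finite
  finV := Quotient.finite _
  finW := B.finW
  τG := contractEnds B.τG M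
  τH := fun e => B.τH e.1
  ordV := ord
  ordW := B.ordW

/-- The bigraph `B ^ M = (G ∖ M, H / M)`: delete the biedges of `M` in `G` and contract them
in `H`. -/
def ctrH (M : Set B.ℰ) (ord : LinearOrder (Quotient (contrSetoid B.τH M))) : Bigraph where
  ℰ := {e : B.ℰ // e ∉ M}
  V := B.V
  W := Quotient (contrSetoid B.τH M)
  finE := Subtype.finite
  finV := B.finV
  finW := Quotient.finite _
  τG := fun e => B.τG e.1
  τH := contractEnds B.τH M
  ordV := B.ordV
  ordW := ord

/-! ### Bidistances -/

/-- Symmetry of a function on `P`: `d_V(u,v) = d_V(v,u)`. -/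
def BidistSymmG (dV : ↥B.Pset → ℚ) : Prop :=
  ∀ p p' : ↥B.Pset, (p' : B.V × B.V) = ((p : B.V × B.V).2, (p : B.V × B.V).1) → dV p' = dV p

/-- Symmetry of a function on `Q`: `d_W(t,w) = d_W(w,t)`. -/
def BidistSymmH (dW : ↥B.Qset → ℚ) : Prop :=
  ∀ q q' : ↥B.Qset, (q' : B.W × B.W) = ((q : B.W × B.W).2, (q : B.W × B.W).1) → dW q' = dW q

/-- The sum condition: `d_V(u,v) + d_W(t,w) = wt(e)` for every biedge `e ≠ ebar`. -/
def BidistSum (ebar : B.ℰ) (wt : {e : B.ℰ // e ≠ ebar} → ℚ)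
    (dV : ↥B.Pset → ℚ) (dW : ↥B.Qset → ℚ) : Prop :=
  ∀ e : {e : B.ℰ // e ≠ ebar}, ∀ p : ↥B.Pset, ∀ q : ↥B.Qset,
    s((p : B.V × B.V).1, (p : B.V × B.V).2) = B.τG e.1 →
    s((q : B.W × B.W).1, (q : B.W × B.W).2) = B.τH e.1 →
    dV p + dW q = wt e

/-- The base condition: `d_V(ū,v̄) = d_W(t̄,w̄) = 0` on the distinguished biedge. -/
def BidistBase (ebar : B.ℰ) (dV : ↥B.Pset → ℚ) (dW : ↥B.Qset → ℚ) : Prop :=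
  (∀ p : ↥B.Pset, s((p : B.V × B.V).1, (p : B.V × B.V).2) = B.τG ebar → dV p = 0) ∧
  (∀ q : ↥B.Qset, s((q : B.W × B.W).1, (q : B.W × B.W).2) = B.τH ebar → dW q = 0)

/-- On every closed walk in `G`, the minimum of `d_V` over the consecutive vertex pairs is
attained at least twice. -/
def BidistMinG (dV : ↥B.Pset → ℚ) : Prop :=
  ∀ (n : ℕ) (u : ℕ → B.V) (w : Fin n → ↥B.Pset),
    (∀ i : Fin n, (w i : B.V × B.V) = (u i.1, u (i.1 + 1))) → u n = u 0 →
    ∀ i : Fin n, (∀ k, dV (w i) ≤ dV (w k)) → ∃ j, j ≠ i ∧ dV (w j) = dV (w i)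

/-- On every closed walk in `H`, the minimum of `d_W` over the consecutive vertex pairs is
attained at least twice. -/
def BidistMinH (dW : ↥B.Qset → ℚ) : Prop :=
  ∀ (n : ℕ) (u : ℕ → B.W) (w : Fin n → ↥B.Qset),
    (∀ i : Fin n, (w i : B.W × B.W) = (u i.1, u (i.1 + 1))) → u n = u 0 →
    ∀ i : Fin n, (∀ k, dW (w i) ≤ dW (w k)) → ∃ j, j ≠ i ∧ dW (w j) = dW (w i)

/-- A bidistance on `B` compatible with the weight vector `wt`. -/
def IsBidistance (ebar : B.ℰ) (wt : {e : B.ℰ // e ≠ ebar} → ℚ)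
    (dV : ↥B.Pset → ℚ) (dW : ↥B.Qset → ℚ) : Prop :=
  B.BidistSymmG dV ∧ B.BidistSymmH dW ∧ B.BidistSum ebar wt dV dW ∧
  B.BidistBase ebar dV dW ∧ B.BidistMinG dV ∧ B.BidistMinH dW

/-! ### The quotient bigraph `B_d` -/

/-- The value of `d_V` on (the endpoint pair of) a biedge. -/
def gvalG (dV : ↥B.Pset → ℚ) (e : B.ℰ) : ℚ :=
  if h : ∃ p : ↥B.Pset, s((p : B.V × B.V).1, (p : B.V × B.V).2) = B.τG e then dV h.choose
  else 0

/-- The value of `d_W` on (the endpoint pair of) a biedge. -/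
def gvalH (dW : ↥B.Qset → ℚ) (e : B.ℰ) : ℚ :=
  if h : ∃ q : ↥B.Qset, s((q : B.W × B.W).1, (q : B.W × B.W).2) = B.τH e then dW h.choose
  else 0

/-- Incidences of the graph `G`: pairs of a biedge and one of its endpoints. -/
def IncG := {q : B.ℰ × B.V // q.2 ∈ B.τG q.1}

/-- Incidences of the graph `H`. -/
def IncH := {q : B.ℰ × B.W // q.2 ∈ B.τH q.1}

instance : Finite B.IncG := by unfold IncG; infer_instance
instance : Finite B.IncH := by unfold IncH; infer_instance

/-- Two incidences `(e,v)`, `(e',v')` of `G` are identified in `B_d` if the `d_V`-levels of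
`e` and `e'` agree (say equal to `α`) and `v`, `v'` are connected by edges of level `> α`. -/
def relIncG (dV : ↥B.Pset → ℚ) : B.IncG → B.IncG → Prop := fun a b =>
  B.gvalG dV a.1.1 = B.gvalG dV b.1.1 ∧
  Relation.EqvGen (fun u v => ∃ e, B.gvalG dV a.1.1 < B.gvalG dV e ∧ B.τG e = s(u, v))
    a.1.2 b.1.2

def relIncH (dW : ↥B.Qset → ℚ) : B.IncH → B.IncH → Prop := fun a b =>
  B.gvalH dW a.1.1 = B.gvalH dW b.1.1 ∧
  Relation.EqvGen (fun u v => ∃ e, B.gvalH dW a.1.1 < B.gvalH dW e ∧ B.τH e = s(u, v))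
    a.1.2 b.1.2

def incSetoidG (dV : ↥B.Pset → ℚ) : Setoid B.IncG :=
  ⟨Relation.EqvGen (B.relIncG dV), Relation.EqvGen.is_equivalence _⟩

def incSetoidH (dW : ↥B.Qset → ℚ) : Setoid B.IncH :=
  ⟨Relation.EqvGen (B.relIncH dW), Relation.EqvGen.is_equivalence _⟩

/-- The vertices of the first graph `G_{d_V}` of the quotient bigraph `B_d`:
classes of incidences.  This realizes the disjoint union of the contractions
`G_{≥α} / G_{>α}` (with isolated vertices discarded). -/
def QVertG (dV : ↥B.Pset → ℚ) := Quotient (B.incSetoidG dV)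

def QVertH (dW : ↥B.Qset → ℚ) := Quotient (B.incSetoidH dW)

/-- The incidence map of `G_{d_V}`. -/
def quotEndsG (dV : ↥B.Pset → ℚ) : B.ℰ → Sym2 (B.QVertG dV) := fun e =>
  s(Quotient.mk (B.incSetoidG dV) ⟨(e, B.eFstG e), B.eFstG_mem e⟩,
    Quotient.mk (B.incSetoidG dV) ⟨(e, B.eSndG e), B.eSndG_mem e⟩)

/-- The incidence map of `H_{d_W}`. -/
def quotEndsH (dW : ↥B.Qset → ℚ) : B.ℰ → Sym2 (B.QVertH dW) := fun e =>
  s(Quotient.mk (B.incSetoidH dW) ⟨(e, B.eFstH e), B.eFstH_mem e⟩,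
    Quotient.mk (B.incSetoidH dW) ⟨(e, B.eSndH e), B.eSndH_mem e⟩)

/-- The quotient bigraph `B_d = (G_{d_V}, H_{d_W})` of a bigraph by a bidistance `(d_V, d_W)`,
with arbitrarily fixed total orders on the new vertex sets.  It has the same biedges as `B`. -/
def quotBigraph (dV : ↥B.Pset → ℚ) (dW : ↥B.Qset → ℚ)
    (oV : LinearOrder (B.QVertG dV)) (oW : LinearOrder (B.QVertH dW)) : Bigraph where
  ℰ := B.ℰ
  V := B.QVertG dV
  W := B.QVertH dW
  finE := B.finE
  finV := Quotient.finite _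
  finW := Quotient.finite _
  τG := B.quotEndsG dV
  τH := B.quotEndsH dW
  ordV := oV
  ordW := oW

/-! ### Untangling -/

/-- `B` untangles via the biedge `ebar` with respect to the decomposition
`ℰ = E1 ⊔ E2 ⊔ {ebar}`, `V = V1 ⊔ V2`, `W = W1 ⊔ W2`:  the graph `G` is the disjoint union
of the subgraph on `V1` with edges `E1 ∪ {ebar}` and the subgraph on `V2` with edges `E2`,
while `H` is the disjoint union of the subgraph on `W1` with edges `E1` and the subgraph on
`W2` with edges `E2 ∪ {ebar}`.  The two bigraphs into which `B` untangles are then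
`B₁ = B.restrict E1` and `B₂ = B.restrict E2`. -/
def Untangles (ebar : B.ℰ) (E1 E2 : Set B.ℰ) (V1 V2 : Set B.V) (W1 W2 : Set B.W) : Prop :=
  ebar ∉ E1 ∧ ebar ∉ E2 ∧ E1 ∩ E2 = ∅ ∧ (∀ e : B.ℰ, e = ebar ∨ e ∈ E1 ∨ e ∈ E2) ∧
  V1 ∩ V2 = ∅ ∧ V1 ∪ V2 = Set.univ ∧
  (∀ e ∈ E1, ∀ v, v ∈ B.τG e → v ∈ V1) ∧ (∀ v, v ∈ B.τG ebar → v ∈ V1) ∧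
  (∀ e ∈ E2, ∀ v, v ∈ B.τG e → v ∈ V2) ∧
  W1 ∩ W2 = ∅ ∧ W1 ∪ W2 = Set.univ ∧
  (∀ e ∈ E1, ∀ x, x ∈ B.τH e → x ∈ W1) ∧
  (∀ e ∈ E2, ∀ x, x ∈ B.τH e → x ∈ W2) ∧ (∀ x, x ∈ B.τH ebar → x ∈ W2)

/-! ### The rational map `f_B` -/

/-- The vector of coordinates of the rational map `f_B`, evaluated on representatives
`x : V → ℂ` and `y : W → ℂ`:  the `e`-th coordinate is `(x_u - x_v)(y_t - y_w)` where
`{u,v} = τ_G(e)` with `u ≺ v` and `{t,w} = τ_H(e)` with `t ≺ w`.  (For a self-loop the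
corresponding factor is `0`.) -/
def fVec (x : B.V → ℂ) (y : B.W → ℂ) : B.ℰ → ℂ :=
  fun e => (x (B.eFstG e) - x (B.eSndG e)) * (y (B.eFstH e) - y (B.eSndH e))

/-- The subspace `L_G` of vectors that are constant on each connected component of `G`. -/
def LG : Submodule ℂ (B.V → ℂ) where
  carrier := {x | ∀ u v : B.V, Relation.EqvGen (adjRel B.τG) u v → x u = x v}
  add_mem' := by
    intro a b ha hb u v h
    simp only [Pi.add_apply, ha u v h, hb u v h]
  zero_mem' := by intro u v _; rfl
  smul_mem' := by
    intro c a ha u v h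
    simp only [Pi.smul_apply, ha u v h]

/-- The subspace `L_H` of vectors that are constant on each connected component of `H`. -/
def LH : Submodule ℂ (B.W → ℂ) where
  carrier := {y | ∀ u v : B.W, Relation.EqvGen (adjRel B.τH) u v → y u = y v}
  add_mem' := by
    intro a b ha hb u v h
    simp only [Pi.add_apply, ha u v h, hb u v h]
  zero_mem' := by intro u v _; rfl
  smul_mem' := by
    intro c a ha u v h
    simp only [Pi.smul_apply, ha u v h]

/-- Dominance of the rational map `f_B`:  the image of `f_B` is not contained in any
proper algebraic subset of `ℙ(ℂ^ℰ)`, equivalently in no zero set of a nonzero homogeneous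
polynomial. -/
def FDominant : Prop :=
  ¬ ∃ (n : ℕ) (P : MvPolynomial B.ℰ ℂ), P ≠ 0 ∧ P.IsHomogeneous n ∧
      ∀ (x : B.V → ℂ) (y : B.W → ℂ), MvPolynomial.eval (B.fVec x y) P = 0

end Bigraph


section Aux

theorem sum_range_tele (g : ℕ → ℂ) (n : ℕ) :
    ∑ i : Fin n, (g i.1 - g (i.1 + 1)) = g 0 - g n := by
  rw [Fin.sum_univ_eq_sum_range (fun i => g i - g (i + 1))]
  exact Finset.sum_range_sub' g n

def PS (ends : E → Sym2 V) : Set (V × V) :=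
  {p | p.1 ≠ p.2 ∧ ∃ e, ends e = s(p.1, p.2)}

variable (ends : E → Sym2 V)

def swapP (p : ↥(PS ends)) : ↥(PS ends) :=
  ⟨((p : V × V).2, (p : V × V).1),
    ⟨Ne.symm p.2.1, by obtain ⟨e, he⟩ := p.2.2; exact ⟨e, he.trans Sym2.eq_swap⟩⟩⟩

variable (xv : ↥(PS ends) → ℂ)

def ClosedZero : Prop :=
  ∀ (n : ℕ) (u : ℕ → V) (w : Fin n → ↥(PS ends)),
    (∀ i : Fin n, (w i : V × V) = (u i.1, u (i.1 + 1))) → u n = u 0 →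
    ∑ i, xv (w i) = 0

def WSum (a b : V) (z : ℂ) : Prop :=
  ∃ (n : ℕ) (u : ℕ → V) (w : Fin n → ↥(PS ends)),
    u 0 = a ∧ u n = b ∧ (∀ i : Fin n, (w i : V × V) = (u i.1, u (i.1 + 1))) ∧
    z = ∑ i, xv (w i)

variable {ends xv}

theorem WSum.refl (a : V) : WSum ends xv a a 0 :=
  ⟨0, fun _ => a, fun i => i.elim0, rfl, rfl, fun i => i.elim0, by simp⟩

theorem WSum.step (p : ↥(PS ends)) :
    WSum ends xv (p : V × V).1 (p : V × V).2 (xv p) := by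
  refine ⟨1, fun i => if i = 0 then (p : V × V).1 else (p : V × V).2, fun _ => p,
    by simp, by simp, ?_, by simp⟩
  intro i
  have : i.1 = 0 := by omega
  simp [this]

theorem WSum.concat {a b c : V} {z1 z2 : ℂ} (h1 : WSum ends xv a b z1)
    (h2 : WSum ends xv b c z2) : WSum ends xv a c (z1 + z2) := by
  obtain ⟨n1, u1, w1, h01, hn1, hw1, hz1⟩ := h1
  obtain ⟨n2, u2, w2, h02, hn2, hw2, hz2⟩ := h2
  refine ⟨n1 + n2, fun i => if i < n1 then u1 i else u2 (i - n1),
    fun i => if h : i.1 < n1 then w1 ⟨i.1, h⟩ else w2 ⟨i.1 - n1, by omega⟩, ?_, ?_, ?_, ?_⟩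
  · by_cases h : 0 < n1
    · simp [h, h01]
    · have hn0 : n1 = 0 := by omega
      have : u1 0 = a := h01
      simp only [hn0] at hn1 ⊢
      simp [h02, ← hn1, h01]
  · have h : ¬ (n1 + n2 < n1) := by omega
    simp [h, hn2]
  · intro i
    by_cases h : i.1 < n1
    · have h1' := hw1 ⟨i.1, h⟩
      simp only [dif_pos h, h1']
      by_cases h2' : i.1 + 1 < n1
      · simp [h, h2']
      · have he : i.1 + 1 = n1 := by omega
        have : u2 (i.1 + 1 - n1) = u1 (i.1 + 1) := by
          rw [he]; simp [h02, ← hn1]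
        simp [h, h2', this]
        rw [h02, ← hn1, he]
    · have h1' := hw2 ⟨i.1 - n1, by omega⟩
      have e1 : ¬ (i.1 + 1 < n1) := by omega
      have e2 : i.1 + 1 - n1 = i.1 - n1 + 1 := by omega
      simp only [dif_neg h, h1', if_neg h, if_neg e1, e2]
  · rw [hz1, hz2, Fin.sum_univ_add]
    congr 1
    · apply Finset.sum_congr rfl
      intro j _
      have h : (Fin.castAdd n2 j).1 < n1 := j.2
      simp only [dif_pos h]
      congr 1
    · apply Finset.sum_congr rfl
      intro j _
      have h : ¬ ((Fin.natAdd n1 j).1 < n1) := by simp [Fin.natAdd]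
      simp only [dif_neg h]
      have : (⟨(Fin.natAdd n1 j).1 - n1, by omega⟩ : Fin n2) = j := by
        apply Fin.ext; simp [Fin.natAdd]
      rw [this]

theorem WSum.zero (hz : ClosedZero ends xv) {a : V} {z : ℂ} (h : WSum ends xv a a z) :
    z = 0 := by
  obtain ⟨n, u, w, h0, hn, hw, hzz⟩ := h
  rw [hzz]
  exact hz n u w hw (hn.trans h0.symm)

theorem xv_swap (hz : ClosedZero ends xv) (p : ↥(PS ends)) :
    xv (swapP ends p) = - xv p := by
  have h := hz 2 (fun i => if i % 2 = 0 then (p : V × V).1 else (p : V × V).2)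
    ![p, swapP ends p] ?_ (by norm_num)
  · rw [Fin.sum_univ_two] at h
    simp only [Matrix.cons_val_zero, Matrix.cons_val_one, Matrix.head_cons] at h
    linear_combination h
  · intro i
    fin_cases i
    · simp
    · simp [swapP]

theorem WSum.rev (hz : ClosedZero ends xv) {a b : V} {z : ℂ} (h : WSum ends xv a b z) :
    WSum ends xv b a (-z) := by
  obtain ⟨n, u, w, h0, hn, hw, hzz⟩ := h
  refine ⟨n, fun i => u (n - i), fun i => swapP ends (w i.rev), by simp [hn], by simp [h0], ?_, ?_⟩
  · intro i
    have hwr := hw i.rev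
    have hv : (i.rev).1 = n - (i.1 + 1) := Fin.val_rev i
    have e1 : n - (i.1 + 1) + 1 = n - i.1 := by omega
    have e2 : n - (i.1 + 1) = n - (i.1 + 1) := rfl
    simp only [swapP, hwr, hv, e1]
  · rw [hzz]
    symm
    calc ∑ i : Fin n, xv (swapP ends (w i.rev))
        = ∑ i : Fin n, - xv (w i.rev) := Finset.sum_congr rfl (fun i _ => xv_swap hz _)
      _ = - ∑ i : Fin n, xv (w i.rev) := by rw [Finset.sum_neg_distrib]
      _ = - ∑ i : Fin n, xv (w i) := by
            rw [Fintype.sum_bijective Fin.rev Fin.rev_involutive.bijective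
              (fun i => xv (w i.rev)) (fun j => xv (w j)) (fun x => rfl)]

theorem WSum.unique (hz : ClosedZero ends xv) {a b : V} {z1 z2 : ℂ}
    (h1 : WSum ends xv a b z1) (h2 : WSum ends xv a b z2) : z1 = z2 := by
  have h := (h1.concat (h2.rev hz)).zero hz
  linear_combination h

theorem WSum.exists_of_eqvgen (hz : ClosedZero ends xv)
    (noloop : ∀ e, ¬ (ends e).IsDiag) {a b : V}
    (h : Relation.EqvGen (adjRel ends) a b) : ∃ z, WSum ends xv a b z := by
  induction h with
  | rel a b hab =>
      obtain ⟨e, he⟩ := hab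
      have hne : a ≠ b := by
        rintro rfl
        exact noloop e (he ▸ Sym2.mk_isDiag_iff.mpr rfl)
      exact ⟨xv ⟨(a, b), hne, e, he⟩, WSum.step ⟨(a, b), hne, e, he⟩⟩
  | refl a => exact ⟨0, WSum.refl a⟩
  | symm a b _ ih => obtain ⟨z, hzz⟩ := ih; exact ⟨-z, hzz.rev hz⟩
  | trans a b c _ _ ih1 ih2 =>
      obtain ⟨z1, hz1⟩ := ih1; obtain ⟨z2, hz2⟩ := ih2
      exact ⟨z1 + z2, hz1.concat hz2⟩

theorem coboundary (hz : ClosedZero ends xv) (noloop : ∀ e, ¬ (ends e).IsDiag) :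
    ∃ x : V → ℂ, ∀ p : ↥(PS ends), x (p : V × V).1 - x (p : V × V).2 = xv p := by
  have hex : ∀ u : V, ∃ z,
      WSum ends xv ((Quotient.mk (ccSetoid ends) u).out) u z := fun u =>
    WSum.exists_of_eqvgen hz noloop
      (Quotient.exact ((Quotient.mk (ccSetoid ends) u).out_eq))
  choose c hc using hex
  refine ⟨fun u => - c u, ?_⟩
  intro p
  obtain ⟨hne, e, he⟩ := p.2
  have hadj : Relation.EqvGen (adjRel ends) (p : V × V).1 (p : V × V).2 :=
    Relation.EqvGen.rel _ _ ⟨e, he⟩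
  have hrepeq : (Quotient.mk (ccSetoid ends) (p : V × V).1).out
      = (Quotient.mk (ccSetoid ends) (p : V × V).2).out :=
    congrArg Quotient.out (Quotient.sound hadj)
  have h2 : WSum ends xv ((Quotient.mk (ccSetoid ends) (p : V × V).2).out) (p : V × V).2
      (c (p : V × V).1 + xv p) := by
    rw [← hrepeq]
    exact (hc (p : V × V).1).concat (WSum.step p)
  have h3 : c (p : V × V).2 = c (p : V × V).1 + xv p :=
    WSum.unique hz (hc (p : V × V).2) h2
  show - c (p : V × V).1 - - c (p : V × V).2 = xv p
  linear_combination h3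

end Aux

section BLevel

theorem sMinMax [LinearOrder V] (s : Sym2 V) : s(sMin s, sMax s) = s := by
  induction s using Sym2.ind with
  | _ x y =>
    simp only [sMin, sMax, Sym2.lift_mk]
    rcases le_total x y with h | h
    · rw [min_eq_left h, max_eq_right h]
    · rw [min_eq_right h, max_eq_left h, Sym2.eq_swap]

variable (B : Bigraph) (ebar : B.ℰ) (lam : {e : B.ℰ // e ≠ ebar} → ℂ)

theorem tauG_eq (e : B.ℰ) : B.τG e = s(B.eFstG e, B.eSndG e) := by
  letI := B.ordV; exact (sMinMax _).symm

theorem tauH_eq (e : B.ℰ) : B.τH e = s(B.eFstH e, B.eSndH e) := by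
  letI := B.ordW; exact (sMinMax _).symm

theorem noloopG (hloop : ¬ B.HasLoop) : ∀ e, ¬ (B.τG e).IsDiag :=
  fun e h => hloop (Or.inl ⟨e, h⟩)

theorem noloopH (hloop : ¬ B.HasLoop) : ∀ e, ¬ (B.τH e).IsDiag :=
  fun e h => hloop (Or.inr ⟨e, h⟩)

theorem memP (hloop : ¬ B.HasLoop) (e : B.ℰ) :
    (B.eFstG e, B.eSndG e) ∈ B.Pset := by
  refine ⟨fun h => ?_, ⟨e, tauG_eq B e⟩⟩
  exact noloopG B hloop e (by rw [tauG_eq B e]; exact Sym2.mk_isDiag_iff.mpr h)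

theorem memQ (hloop : ¬ B.HasLoop) (e : B.ℰ) :
    (B.eFstH e, B.eSndH e) ∈ B.Qset := by
  refine ⟨fun h => ?_, ⟨e, tauH_eq B e⟩⟩
  exact noloopH B hloop e (by rw [tauH_eq B e]; exact Sym2.mk_isDiag_iff.mpr h)

noncomputable def zX (x : B.V → ℂ) : ↥B.Pset → ℂ :=
  fun p => (x (p : B.V × B.V).1 - x (p : B.V × B.V).2) /
    (x (B.eFstG ebar) - x (B.eSndG ebar))

noncomputable def zY (y : B.W → ℂ) : ↥B.Qset → ℂ :=
  fun q => (y (q : B.W × B.W).1 - y (q : B.W × B.W).2) /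
    (y (B.eFstH ebar) - y (B.eSndH ebar))

theorem mem_LG_iff (x : B.V → ℂ) :
    x ∈ B.LG ↔ ∀ u v, Relation.EqvGen (adjRel B.τG) u v → x u = x v := Iff.rfl

theorem mem_LH_iff (y : B.W → ℂ) :
    y ∈ B.LH ↔ ∀ u v, Relation.EqvGen (adjRel B.τH) u v → y u = y v := Iff.rfl

theorem deltas {x : B.V → ℂ} {y : B.W → ℂ} {c : ℂ} (hc : c ≠ 0)
    (hf : ∀ e : B.ℰ, B.fVec x y e = c * (if h : e = ebar then 1 else lam ⟨e, h⟩)) :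
    (x (B.eFstG ebar) - x (B.eSndG ebar)) * (y (B.eFstH ebar) - y (B.eSndH ebar)) = c ∧
    x (B.eFstG ebar) - x (B.eSndG ebar) ≠ 0 ∧
    y (B.eFstH ebar) - y (B.eSndH ebar) ≠ 0 := by
  have h1 : (x (B.eFstG ebar) - x (B.eSndG ebar)) *
      (y (B.eFstH ebar) - y (B.eSndH ebar)) = c := by
    have := hf ebar
    rw [dif_pos rfl, mul_one] at this
    exact this
  refine ⟨h1, ?_, ?_⟩
  · intro h; rw [h, zero_mul] at h1; exact hc h1.symm
  · intro h; rw [h, mul_zero] at h1; exact hc h1.symm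

theorem mem_ZSet {x : B.V → ℂ} {y : B.W → ℂ} {c : ℂ} (hc : c ≠ 0)
    (hf : ∀ e : B.ℰ, B.fVec x y e = c * (if h : e = ebar then 1 else lam ⟨e, h⟩)) :
    (zX B ebar x, zY B ebar y) ∈ B.ZSet ebar lam := by
  obtain ⟨hmul, hdx, hdy⟩ := deltas B ebar lam hc hf
  refine ⟨?_, ?_, ?_, ?_, ?_⟩
  · intro p hp
    show (x (p : B.V × B.V).1 - x (p : B.V × B.V).2) / _ = 1
    rw [hp]
    exact div_self hdx
  · intro q hq
    show (y (q : B.W × B.W).1 - y (q : B.W × B.W).2) / _ = 1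
    rw [hq]
    exact div_self hdy
  · intro e p q hp hq
    show (x (p : B.V × B.V).1 - x (p : B.V × B.V).2) / _ *
      ((y (q : B.W × B.W).1 - y (q : B.W × B.W).2) / _) = lam e
    rw [hp, hq]
    have he := hf e.1
    rw [dif_neg e.2] at he
    rw [div_mul_div_comm, hmul]
    rw [show (x (B.eFstG e.1) - x (B.eSndG e.1)) * (y (B.eFstH e.1) - y (B.eSndH e.1))
        = c * lam e from he]
    exact mul_div_cancel_left₀ _ hc
  · intro n u w hw hu
    have heach : ∀ i : Fin n, zX B ebar x (w i)
        = (x (u i.1) - x (u (i.1 + 1))) / (x (B.eFstG ebar) - x (B.eSndG ebar)) := by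
      intro i
      show (x ((w i : B.V × B.V)).1 - x ((w i : B.V × B.V)).2) / _ = _
      rw [hw i]
    rw [Finset.sum_congr rfl (fun i _ => heach i), ← Finset.sum_div,
      sum_range_tele (fun k => x (u k)) n, hu]
    simp
  · intro n u w hw hu
    have heach : ∀ i : Fin n, zY B ebar y (w i)
        = (y (u i.1) - y (u (i.1 + 1))) / (y (B.eFstH ebar) - y (B.eSndH ebar)) := by
      intro i
      show (y ((w i : B.W × B.W)).1 - y ((w i : B.W × B.W)).2) / _ = _
      rw [hw i]
    rw [Finset.sum_congr rfl (fun i _ => heach i), ← Finset.sum_div,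
      sum_range_tele (fun k => y (u k)) n, hu]
    simp

theorem diff_prop {V' E' : Type} (ends : E' → Sym2 V') (x x' : V' → ℂ) (a : ℂ)
    (hmem : ∀ u v, Relation.EqvGen (adjRel ends) u v → x u - a * x' u = x v - a * x' v) :
    ∀ p : ↥(PS ends), x (p : V' × V').1 - x (p : V' × V').2
      = a * (x' (p : V' × V').1 - x' (p : V' × V').2) := by
  intro p
  obtain ⟨hne, e, he⟩ := p.2
  have h := hmem _ _ (Relation.EqvGen.rel _ _ ⟨e, he⟩)
  linear_combination h

theorem mem_of_diff {V' E' : Type} (ends : E' → Sym2 V') (x x' : V' → ℂ) (a : ℂ)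
    (h : ∀ p : ↥(PS ends), x (p : V' × V').1 - x (p : V' × V').2
      = a * (x' (p : V' × V').1 - x' (p : V' × V').2)) :
    ∀ u v, Relation.EqvGen (adjRel ends) u v → (x - a • x') u = (x - a • x') v := by
  intro u v hv
  induction hv with
  | rel u v huv =>
      obtain ⟨e, he⟩ := huv
      by_cases hc : u = v
      · rw [hc]
      · have hp := h ⟨(u, v), hc, e, he⟩
        show x u - a * x' u = x v - a * x' v
        linear_combination hp
  | refl u => rfl
  | symm _ _ _ ih => exact ih.symm
  | trans _ _ _ _ _ ih1 ih2 => exact ih1.trans ih2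

theorem zX_eq {x x' : B.V → ℂ}
    (hx : (Submodule.Quotient.mk x : (B.V → ℂ) ⧸ B.LG) ≠ 0)
    (hx' : (Submodule.Quotient.mk x' : (B.V → ℂ) ⧸ B.LG) ≠ 0)
    (hd' : x' (B.eFstG ebar) - x' (B.eSndG ebar) ≠ 0)
    (hproj : Projectivization.mk ℂ (Submodule.Quotient.mk x) hx =
      Projectivization.mk ℂ (Submodule.Quotient.mk x') hx') :
    zX B ebar x = zX B ebar x' := by
  obtain ⟨a, ha⟩ := (Projectivization.mk_eq_mk_iff ℂ _ _ hx hx').mp hproj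
  have hmem : x - (a : ℂ) • x' ∈ B.LG := by
    apply (Submodule.Quotient.eq B.LG).mp
    rw [Submodule.Quotient.mk_smul]
    exact ha.symm
  have hmem' : ∀ u v, Relation.EqvGen (adjRel B.τG) u v →
      x u - (a : ℂ) * x' u = x v - (a : ℂ) * x' v := by
    intro u v hv
    exact (mem_LG_iff B _).mp hmem u v hv
  have hprop := diff_prop B.τG x x' (a : ℂ) hmem'
  have hdel : x (B.eFstG ebar) - x (B.eSndG ebar)
      = (a : ℂ) * (x' (B.eFstG ebar) - x' (B.eSndG ebar)) := by
    have h := hmem' _ _ (Relation.EqvGen.rel _ _ ⟨ebar, tauG_eq B ebar⟩)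
    linear_combination h
  funext p
  show (x (p : B.V × B.V).1 - x (p : B.V × B.V).2) / _ = _ / _
  rw [hprop p, hdel, mul_div_mul_left _ _ a.ne_zero]

theorem zY_eq {y y' : B.W → ℂ}
    (hy : (Submodule.Quotient.mk y : (B.W → ℂ) ⧸ B.LH) ≠ 0)
    (hy' : (Submodule.Quotient.mk y' : (B.W → ℂ) ⧸ B.LH) ≠ 0)
    (hd' : y' (B.eFstH ebar) - y' (B.eSndH ebar) ≠ 0)
    (hproj : Projectivization.mk ℂ (Submodule.Quotient.mk y) hy =
      Projectivization.mk ℂ (Submodule.Quotient.mk y') hy') :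
    zY B ebar y = zY B ebar y' := by
  obtain ⟨a, ha⟩ := (Projectivization.mk_eq_mk_iff ℂ _ _ hy hy').mp hproj
  have hmem : y - (a : ℂ) • y' ∈ B.LH := by
    apply (Submodule.Quotient.eq B.LH).mp
    rw [Submodule.Quotient.mk_smul]
    exact ha.symm
  have hmem' : ∀ u v, Relation.EqvGen (adjRel B.τH) u v →
      y u - (a : ℂ) * y' u = y v - (a : ℂ) * y' v := by
    intro u v hv
    exact (mem_LH_iff B _).mp hmem u v hv
  have hprop := diff_prop B.τH y y' (a : ℂ) hmem'
  have hdel : y (B.eFstH ebar) - y (B.eSndH ebar)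
      = (a : ℂ) * (y' (B.eFstH ebar) - y' (B.eSndH ebar)) := by
    have h := hmem' _ _ (Relation.EqvGen.rel _ _ ⟨ebar, tauH_eq B ebar⟩)
    linear_combination h
  funext q
  show (y (q : B.W × B.W).1 - y (q : B.W × B.W).2) / _ = _ / _
  rw [hprop q, hdel, mul_div_mul_left _ _ a.ne_zero]

theorem proj_eq {x x' : B.V → ℂ}
    (hx : (Submodule.Quotient.mk x : (B.V → ℂ) ⧸ B.LG) ≠ 0)
    (hx' : (Submodule.Quotient.mk x' : (B.V → ℂ) ⧸ B.LG) ≠ 0)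
    (hd : x (B.eFstG ebar) - x (B.eSndG ebar) ≠ 0)
    (hd' : x' (B.eFstG ebar) - x' (B.eSndG ebar) ≠ 0)
    (hz : zX B ebar x = zX B ebar x') :
    Projectivization.mk ℂ (Submodule.Quotient.mk x) hx =
      Projectivization.mk ℂ (Submodule.Quotient.mk x') hx' := by
  set s : ℂ := (x (B.eFstG ebar) - x (B.eSndG ebar)) /
    (x' (B.eFstG ebar) - x' (B.eSndG ebar)) with hs_def
  have hs : s ≠ 0 := div_ne_zero hd hd'
  have hdiff : ∀ p : ↥B.Pset, x (p : B.V × B.V).1 - x (p : B.V × B.V).2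
      = s * (x' (p : B.V × B.V).1 - x' (p : B.V × B.V).2) := by
    intro p
    have h := congrFun hz p
    have h' : (x (p : B.V × B.V).1 - x (p : B.V × B.V).2) /
        (x (B.eFstG ebar) - x (B.eSndG ebar)) =
        (x' (p : B.V × B.V).1 - x' (p : B.V × B.V).2) /
        (x' (B.eFstG ebar) - x' (B.eSndG ebar)) := h
    rw [div_eq_div_iff hd hd'] at h'
    rw [hs_def]
    field_simp
    linear_combination h'
  have hmem : x - s • x' ∈ B.LG :=
    (mem_LG_iff B _).mpr (mem_of_diff B.τG x x' s hdiff)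
  rw [Projectivization.mk_eq_mk_iff]
  refine ⟨Units.mk0 s hs, ?_⟩
  rw [Units.smul_def, Units.val_mk0, ← Submodule.Quotient.mk_smul]
  exact ((Submodule.Quotient.eq B.LG).mpr hmem).symm

theorem proj_eqH {y y' : B.W → ℂ}
    (hy : (Submodule.Quotient.mk y : (B.W → ℂ) ⧸ B.LH) ≠ 0)
    (hy' : (Submodule.Quotient.mk y' : (B.W → ℂ) ⧸ B.LH) ≠ 0)
    (hd : y (B.eFstH ebar) - y (B.eSndH ebar) ≠ 0)
    (hd' : y' (B.eFstH ebar) - y' (B.eSndH ebar) ≠ 0)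
    (hz : zY B ebar y = zY B ebar y') :
    Projectivization.mk ℂ (Submodule.Quotient.mk y) hy =
      Projectivization.mk ℂ (Submodule.Quotient.mk y') hy' := by
  set s : ℂ := (y (B.eFstH ebar) - y (B.eSndH ebar)) /
    (y' (B.eFstH ebar) - y' (B.eSndH ebar)) with hs_def
  have hs : s ≠ 0 := div_ne_zero hd hd'
  have hdiff : ∀ q : ↥B.Qset, y (q : B.W × B.W).1 - y (q : B.W × B.W).2
      = s * (y' (q : B.W × B.W).1 - y' (q : B.W × B.W).2) := by
    intro q
    have h := congrFun hz q
    have h' : (y (q : B.W × B.W).1 - y (q : B.W × B.W).2) /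
        (y (B.eFstH ebar) - y (B.eSndH ebar)) =
        (y' (q : B.W × B.W).1 - y' (q : B.W × B.W).2) /
        (y' (B.eFstH ebar) - y' (B.eSndH ebar)) := h
    rw [div_eq_div_iff hd hd'] at h'
    rw [hs_def]
    field_simp
    linear_combination h'
  have hmem : y - s • y' ∈ B.LH :=
    (mem_LH_iff B _).mpr (mem_of_diff B.τH y y' s hdiff)
  rw [Projectivization.mk_eq_mk_iff]
  refine ⟨Units.mk0 s hs, ?_⟩
  rw [Units.smul_def, Units.val_mk0, ← Submodule.Quotient.mk_smul]
  exact ((Submodule.Quotient.eq B.LH).mpr hmem).symm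

end BLevel

section Final

variable (B : Bigraph) (ebar : B.ℰ) (lam : {e : B.ℰ // e ≠ ebar} → ℂ)

def Fib : Set (Projectivization ℂ ((B.V → ℂ) ⧸ B.LG) ×
    Projectivization ℂ ((B.W → ℂ) ⧸ B.LH)) :=
  {XY | ∃ (x : B.V → ℂ) (y : B.W → ℂ)
      (hx : (Submodule.Quotient.mk x : (B.V → ℂ) ⧸ B.LG) ≠ 0)
      (hy : (Submodule.Quotient.mk y : (B.W → ℂ) ⧸ B.LH) ≠ 0),
      XY.1 = Projectivization.mk ℂ (Submodule.Quotient.mk x) hx ∧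
      XY.2 = Projectivization.mk ℂ (Submodule.Quotient.mk y) hy ∧
      B.fVec x y ≠ 0 ∧
      ∃ c : ℂ, c ≠ 0 ∧ ∀ e : B.ℰ,
        B.fVec x y e = c * (if h : e = ebar then 1 else lam ⟨e, h⟩)}

theorem mem_Fib {XY : Projectivization ℂ ((B.V → ℂ) ⧸ B.LG) ×
    Projectivization ℂ ((B.W → ℂ) ⧸ B.LH)} (h : XY ∈ Fib B ebar lam) :
    ∃ (x : B.V → ℂ) (y : B.W → ℂ)
      (hx : (Submodule.Quotient.mk x : (B.V → ℂ) ⧸ B.LG) ≠ 0)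
      (hy : (Submodule.Quotient.mk y : (B.W → ℂ) ⧸ B.LH) ≠ 0),
      XY.1 = Projectivization.mk ℂ (Submodule.Quotient.mk x) hx ∧
      XY.2 = Projectivization.mk ℂ (Submodule.Quotient.mk y) hy ∧
      B.fVec x y ≠ 0 ∧
      ∃ c : ℂ, c ≠ 0 ∧ ∀ e : B.ℰ,
        B.fVec x y e = c * (if h : e = ebar then 1 else lam ⟨e, h⟩) := h

noncomputable def Fmap (a : ↥(Fib B ebar lam)) : (↥B.Pset → ℂ) × (↥B.Qset → ℂ) :=
  (zX B ebar (mem_Fib B ebar lam a.2).choose,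
   zY B ebar (mem_Fib B ebar lam a.2).choose_spec.choose)

theorem Fmap_spec (a : ↥(Fib B ebar lam)) :
    ∃ (x : B.V → ℂ) (y : B.W → ℂ)
      (hx : (Submodule.Quotient.mk x : (B.V → ℂ) ⧸ B.LG) ≠ 0)
      (hy : (Submodule.Quotient.mk y : (B.W → ℂ) ⧸ B.LH) ≠ 0),
      (a.1).1 = Projectivization.mk ℂ (Submodule.Quotient.mk x) hx ∧
      (a.1).2 = Projectivization.mk ℂ (Submodule.Quotient.mk y) hy ∧
      (∃ c : ℂ, c ≠ 0 ∧ ∀ e : B.ℰ,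
        B.fVec x y e = c * (if h : e = ebar then 1 else lam ⟨e, h⟩)) ∧
      Fmap B ebar lam a = (zX B ebar x, zY B ebar y) := by
  obtain ⟨hx, hy, h1, h2, -, hw⟩ :=
    (mem_Fib B ebar lam a.2).choose_spec.choose_spec
  exact ⟨_, _, hx, hy, h1, h2, hw, rfl⟩

theorem main (hloop : ¬ B.HasLoop) :
    Nonempty (↥(Fib B ebar lam) ≃ ↥(B.ZSet ebar lam)) := by
  have hmem : ∀ a : ↥(Fib B ebar lam), Fmap B ebar lam a ∈ B.ZSet ebar lam := by
    intro a
    obtain ⟨x, y, hx, hy, h1, h2, ⟨c, hc, hf⟩, heq⟩ := Fmap_spec B ebar lam a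
    rw [heq]
    exact mem_ZSet B ebar lam hc hf
  refine ⟨Equiv.ofBijective (fun a => ⟨Fmap B ebar lam a, hmem a⟩) ⟨?_, ?_⟩⟩
  · intro a b hab
    have hab' : Fmap B ebar lam a = Fmap B ebar lam b := congrArg Subtype.val hab
    obtain ⟨xa, ya, hxa, hya, ha1, ha2, ⟨ca, hca, hfa⟩, heqa⟩ := Fmap_spec B ebar lam a
    obtain ⟨xb, yb, hxb, hyb, hb1, hb2, ⟨cb, hcb, hfb⟩, heqb⟩ := Fmap_spec B ebar lam b
    rw [heqa, heqb] at hab'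
    obtain ⟨-, hda, hea⟩ := deltas B ebar lam hca hfa
    obtain ⟨-, hdb, heb⟩ := deltas B ebar lam hcb hfb
    apply Subtype.ext
    apply Prod.ext
    · rw [ha1, hb1]
      exact proj_eq B ebar hxa hxb hda hdb (congrArg Prod.fst hab')
    · rw [ha2, hb2]
      exact proj_eqH B ebar hya hyb hea heb (congrArg Prod.snd hab')
  · intro b
    obtain ⟨h1, h2, h3, h4, h5⟩ := b.2
    obtain ⟨x, hxp⟩ := coboundary (ends := B.τG) (xv := b.1.1) h4 (noloopG B hloop)
    obtain ⟨y, hyp⟩ := coboundary (ends := B.τH) (xv := b.1.2) h5 (noloopH B hloop)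
    have hδ : x (B.eFstG ebar) - x (B.eSndG ebar) = 1 := by
      have h := hxp ⟨(B.eFstG ebar, B.eSndG ebar), memP B hloop ebar⟩
      rw [h]; exact h1 _ rfl
    have hε : y (B.eFstH ebar) - y (B.eSndH ebar) = 1 := by
      have h := hyp ⟨(B.eFstH ebar, B.eSndH ebar), memQ B hloop ebar⟩
      rw [h]; exact h2 _ rfl
    have hf : ∀ e : B.ℰ, B.fVec x y e
        = 1 * (if h : e = ebar then 1 else lam ⟨e, h⟩) := by
      intro e
      have hpx := hxp ⟨(B.eFstG e, B.eSndG e), memP B hloop e⟩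
      have hqy := hyp ⟨(B.eFstH e, B.eSndH e), memQ B hloop e⟩
      show (x (B.eFstG e) - x (B.eSndG e)) * (y (B.eFstH e) - y (B.eSndH e)) = _
      rw [hpx, hqy, one_mul]
      by_cases he : e = ebar
      · subst he
        rw [dif_pos rfl]
        exact (congrArg₂ (· * ·) (h1 ⟨(B.eFstG e, B.eSndG e), memP B hloop e⟩ rfl)
          (h2 ⟨(B.eFstH e, B.eSndH e), memQ B hloop e⟩ rfl)).trans (mul_one 1)
      · rw [dif_neg he]
        exact h3 ⟨e, he⟩ _ _ rfl rfl
    have hx0 : (Submodule.Quotient.mk x : (B.V → ℂ) ⧸ B.LG) ≠ 0 := by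
      intro h0
      have hmm := (Submodule.Quotient.mk_eq_zero _).mp h0
      have h := (mem_LG_iff B x).mp hmm _ _
        (Relation.EqvGen.rel _ _ ⟨ebar, tauG_eq B ebar⟩)
      rw [h] at hδ
      simp at hδ
    have hy0 : (Submodule.Quotient.mk y : (B.W → ℂ) ⧸ B.LH) ≠ 0 := by
      intro h0
      have hmm := (Submodule.Quotient.mk_eq_zero _).mp h0
      have h := (mem_LH_iff B y).mp hmm _ _
        (Relation.EqvGen.rel _ _ ⟨ebar, tauH_eq B ebar⟩)
      rw [h] at hε
      simp at hε
    have hfne : B.fVec x y ≠ 0 := by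
      intro hh
      have h := congrFun hh ebar
      rw [hf ebar, dif_pos rfl] at h
      simp at h
    refine ⟨⟨(Projectivization.mk ℂ (Submodule.Quotient.mk x) hx0,
        Projectivization.mk ℂ (Submodule.Quotient.mk y) hy0),
        ⟨x, y, hx0, hy0, rfl, rfl, hfne, 1, one_ne_zero, hf⟩⟩, ?_⟩
    apply Subtype.ext
    obtain ⟨x0, y0, hx0', hy0', hp1, hp2, ⟨c0, hc0, hf0⟩, heq0⟩ :=
      Fmap_spec B ebar lam ⟨(Projectivization.mk ℂ (Submodule.Quotient.mk x) hx0,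
        Projectivization.mk ℂ (Submodule.Quotient.mk y) hy0),
        ⟨x, y, hx0, hy0, rfl, rfl, hfne, 1, one_ne_zero, hf⟩⟩
    show Fmap B ebar lam _ = b.1
    rw [heq0]
    have hzx : zX B ebar x0 = zX B ebar x :=
      zX_eq B ebar hx0' hx0 (by rw [hδ]; exact one_ne_zero) hp1.symm
    have hzy : zY B ebar y0 = zY B ebar y :=
      zY_eq B ebar hy0' hy0 (by rw [hε]; exact one_ne_zero) hp2.symm
    rw [hzx, hzy]
    have hbx : zX B ebar x = b.1.1 := by
      funext p
      show (x (p : B.V × B.V).1 - x (p : B.V × B.V).2) / _ = _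
      rw [hδ, hxp p, div_one]
    have hby : zY B ebar y = b.1.2 := by
      funext q
      show (y (q : B.W × B.W).1 - y (q : B.W × B.W).2) / _ = _
      rw [hε, hyp q, div_one]
    rw [hbx, hby]

end Final
/-- The fiber of `f_B` over the point `p ∈ ℙ(ℂ^ℰ)` with `p_ē = 1` and
`p_e = λ_e` otherwise is in bijection with the affine solution set `Z^B(λ)`. -/
theorem statement7 (B : Bigraph) (hloop : ¬ B.HasLoop) (ebar : B.ℰ)
    (lam : {e : B.ℰ // e ≠ ebar} → ℂ) :
    Nonempty
      (↥{XY : Projectivization ℂ ((B.V → ℂ) ⧸ B.LG) ×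
            Projectivization ℂ ((B.W → ℂ) ⧸ B.LH) |
          ∃ (x : B.V → ℂ) (y : B.W → ℂ)
            (hx : (Submodule.Quotient.mk x : (B.V → ℂ) ⧸ B.LG) ≠ 0)
            (hy : (Submodule.Quotient.mk y : (B.W → ℂ) ⧸ B.LH) ≠ 0),
            XY.1 = Projectivization.mk ℂ (Submodule.Quotient.mk x) hx ∧
            XY.2 = Projectivization.mk ℂ (Submodule.Quotient.mk y) hy ∧
            B.fVec x y ≠ 0 ∧
            ∃ c : ℂ, c ≠ 0 ∧ ∀ e : B.ℰ,
              B.fVec x y e = c * (if h : e = ebar then 1 else lam ⟨e, h⟩)} ≃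
        ↥(B.ZSet ebar lam)) := by
  exact main B ebar lam hloop

end LamanPaper
end
end
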